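/- arXiv:2203.02630 — 9 statements merged into one kernel-verified Lean document; each statement's English description precedes it below -/
import Mathlib

section
/- Let W ≥ 0 be a real number and H ≥ 1 a natural number. Let a_t[k] ≥ 0 for t ≥ 0 and 1 ≤ k ≤ H be nonnegative reals, and let (s_t)_{t≥0} be a sequence of positive reals such that for every t ≥ 1, s_t ≤ Σ_{k=1}^{min(t,H)} a_{t−1}[k]·s_{t−k} + W. If Σ_{t=0}^∞ Σ_{k=1}^H a_t[k] ≤ L for some L ≥ 0, then for all t ≥ 0: s_t ≤ e^{−t/H}·e^L·s_0 + W·(e^L + e − 1)/(e − 1). In particular the sequence (s_t) is bounded. -/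
/-- **Sufficient condition for H-convolution.**
Let `W ≥ 0` be real, `H ≥ 1` natural.  Let `a t k ≥ 0` (for `1 ≤ k ≤ H`) and `s` a positive
sequence with `s t ≤ ∑_{k=1}^{min(t,H)} a (t-1) k * s (t-k) + W` for `t ≥ 1`.  If all partial sums
`∑_{t<T} ∑_{k=1}^H a t k` are bounded by `L ≥ 0` (i.e. `∑_{t=0}^∞ ∑_{k=1}^H a t k ≤ L`), then for
all `t`, `s t ≤ e^{-t/H} e^L s 0 + W (e^L + e - 1)/(e - 1)`. -/
theorem sufficient_condition_for_H_convolution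
    (W L : ℝ) (hW : 0 ≤ W) (hL : 0 ≤ L) (H : ℕ) (hH : 1 ≤ H)
    (a : ℕ → ℕ → ℝ) (ha : ∀ t : ℕ, ∀ k ∈ Finset.Icc 1 H, 0 ≤ a t k)
    (s : ℕ → ℝ) (hs : ∀ t : ℕ, 0 < s t)
    (hrec : ∀ t : ℕ, 1 ≤ t →
      s t ≤ (∑ k ∈ Finset.Icc 1 (min t H), a (t - 1) k * s (t - k)) + W)
    (hsum : ∀ T : ℕ, ∑ t ∈ Finset.range T, ∑ k ∈ Finset.Icc 1 H, a t k ≤ L) :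
    ∀ t : ℕ, s t ≤ Real.exp (-(t : ℝ) / H) * Real.exp L * s 0 +
      W * ((Real.exp L + Real.exp 1 - 1) / (Real.exp 1 - 1)) := by
  have he1 : (1:ℝ) < Real.exp 1 := by
    have := Real.exp_one_gt_d9; linarith
  have hd : (0:ℝ) < Real.exp 1 - 1 := by linarith
  have key : ∀ x : ℝ, Real.exp 1 * x ≤ Real.exp x := by
    intro x
    have h := Real.add_one_le_exp (x - 1)
    have hx : Real.exp x = Real.exp 1 * Real.exp (x - 1) := by
      rw [← Real.exp_add]; ring_nf
    rw [hx]
    have := Real.exp_pos (1:ℝ)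
    nlinarith
  set A : ℕ → ℝ := fun u => ∑ k ∈ Finset.Icc 1 H, a u k with hAdef
  have hA0 : ∀ u, 0 ≤ A u := fun u => Finset.sum_nonneg (ha u)
  set Λ : ℕ → ℝ := fun t => ∑ u ∈ Finset.range t, A u with hΛdef
  have hΛ0 : ∀ t, 0 ≤ Λ t := fun t => Finset.sum_nonneg fun u _ => hA0 u
  have hΛmono : ∀ i j : ℕ, i ≤ j → Λ i ≤ Λ j := by
    intro i j hij
    exact Finset.sum_le_sum_of_subset_of_nonneg (Finset.range_subset_range.2 hij)
      (fun u _ _ => hA0 u)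
  have hΛL : ∀ t, Λ t ≤ L := fun t => hsum t
  have hHpos : (0:ℝ) < H := by exact_mod_cast hH
  have hs0 : 0 < s 0 := hs 0
  have main : ∀ t : ℕ, s t ≤ Real.exp (-(t:ℝ)/H) * Real.exp (Λ t) * s 0 +
      W * ((Real.exp (Λ t) + Real.exp 1 - 1) / (Real.exp 1 - 1)) := by
    intro t
    induction t using Nat.strong_induction_on with
    | _ t ih =>
      cases t with
      | zero =>
        have h0 : Λ 0 = 0 := by simp [hΛdef]
        simp only [Nat.cast_zero, neg_zero, zero_div, Real.exp_zero, one_mul, h0]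
        have : 0 ≤ W * ((1 + Real.exp 1 - 1)/(Real.exp 1 - 1)) := by
          apply mul_nonneg hW
          apply div_nonneg _ hd.le
          have := Real.exp_pos (1:ℝ)
          linarith
        linarith
      | succ n =>
        have ht1 : 1 ≤ n + 1 := Nat.le_add_left 1 n
        set E := Real.exp (-((n:ℝ)+1)/H) with hE
        set P := Real.exp (Λ n) with hP
        set Q := Real.exp (A n) with hQ
        have hEpos : 0 < E := Real.exp_pos _
        have hP1 : 1 ≤ P := Real.one_le_exp (hΛ0 n)
        have hQA : Real.exp 1 * A n ≤ Q := key (A n)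
        set B := Real.exp 1 * E * P * s 0 +
          W * ((P + Real.exp 1 - 1)/(Real.exp 1 - 1)) with hB
        have hBpos : 0 ≤ B := by
          apply add_nonneg
          · have := Real.exp_pos (1:ℝ)
            positivity
          · apply mul_nonneg hW
            have : 0 ≤ P + Real.exp 1 - 1 := by linarith
            positivity
        have hterm : ∀ k ∈ Finset.Icc 1 (min (n+1) H), a n k * s (n + 1 - k) ≤ a n k * B := by
          intro k hk
          obtain ⟨hk1, hkm⟩ := Finset.mem_Icc.1 hk
          have hkt : k ≤ n + 1 := hkm.trans (min_le_left _ _)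
          have hkH : k ≤ H := hkm.trans (min_le_right _ _)
          have hlt : n + 1 - k < n + 1 := Nat.sub_lt (Nat.succ_pos n) hk1
          have hcast : ((n + 1 - k : ℕ):ℝ) = (n:ℝ) + 1 - k := by
            push_cast [Nat.cast_sub hkt]; ring
          have hexp1 : Real.exp (-((n + 1 - k : ℕ):ℝ)/H) ≤ Real.exp 1 * E := by
            rw [hE, ← Real.exp_add]
            apply Real.exp_le_exp.2
            rw [hcast]
            have hkR : (k:ℝ) ≤ H := by exact_mod_cast hkH
            have h1 : (k:ℝ)/H ≤ 1 := by rw [div_le_one hHpos]; exact hkR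
            have h2 : -((n:ℝ) + 1 - k)/H = -((n:ℝ)+1)/H + k/H := by ring
            rw [h2]; linarith
          have hexp2 : Real.exp (Λ (n + 1 - k)) ≤ P :=
            Real.exp_le_exp.2 (hΛmono _ n (by omega))
          have hsk : s (n + 1 - k) ≤ B := by
            refine (ih (n + 1 - k) hlt).trans ?_
            rw [hB]
            have h1 : Real.exp (-((n + 1 - k : ℕ):ℝ)/H) * Real.exp (Λ (n + 1 - k)) * s 0
                ≤ Real.exp 1 * E * P * s 0 := by
              apply mul_le_mul_of_nonneg_right _ hs0.le
              exact mul_le_mul hexp1 hexp2 (Real.exp_pos _).le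
                (by have := Real.exp_pos (1:ℝ); positivity)
            have h2 : W * ((Real.exp (Λ (n + 1 - k)) + Real.exp 1 - 1)/(Real.exp 1 - 1))
                ≤ W * ((P + Real.exp 1 - 1)/(Real.exp 1 - 1)) := by
              apply mul_le_mul_of_nonneg_left _ hW
              gcongr
            linarith
          exact mul_le_mul_of_nonneg_left hsk
            (ha n k (Finset.mem_Icc.2 ⟨hk1, hkH⟩))
        have hsum1 : ∑ k ∈ Finset.Icc 1 (min (n+1) H), a n k * s (n + 1 - k) ≤ A n * B := by
          calc ∑ k ∈ Finset.Icc 1 (min (n+1) H), a n k * s (n + 1 - k)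
              ≤ ∑ k ∈ Finset.Icc 1 (min (n+1) H), a n k * B := Finset.sum_le_sum hterm
            _ ≤ ∑ k ∈ Finset.Icc 1 H, a n k * B := by
                apply Finset.sum_le_sum_of_subset_of_nonneg
                  (Finset.Icc_subset_Icc_right (min_le_right _ _))
                intro k hk _
                exact mul_nonneg (ha n k hk) hBpos
            _ = A n * B := by rw [hAdef, ← Finset.sum_mul]
        have hrec' := hrec (n+1) ht1
        simp only [Nat.add_sub_cancel] at hrec'
        have hmain : s (n+1) ≤ A n * B + W := le_trans hrec' (by linarith)
        have hΛt : Λ (n+1) = Λ n + A n := Finset.sum_range_succ A n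
        have hcast2 : (((n:ℕ)+1 : ℕ):ℝ) = (n:ℝ) + 1 := by push_cast; ring
        rw [hΛt, Real.exp_add]
        have hEeq : Real.exp (-(((n:ℕ)+1 : ℕ):ℝ)/H) = E := by rw [hE, hcast2]
        rw [hEeq, ← hP, ← hQ]
        -- remaining algebra
        set C := W / (Real.exp 1 - 1) with hC
        have hC0 : 0 ≤ C := div_nonneg hW hd.le
        have hWC : W = C * (Real.exp 1 - 1) := by rw [hC, div_mul_cancel₀ _ hd.ne']
        have hdiv : ∀ X : ℝ, W * ((X + Real.exp 1 - 1)/(Real.exp 1 - 1)) = C * X + W := by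
          intro X
          rw [hC]
          field_simp
          ring
        rw [hdiv (P * Q)]
        rw [hB, hdiv P] at hmain
        have h3 : 0 ≤ E * P * s 0 * (Q - Real.exp 1 * A n) := by
          apply mul_nonneg _ (by linarith)
          positivity
        have h4 : 0 ≤ C * P * (Q - Real.exp 1 * A n) := by
          apply mul_nonneg _ (by linarith)
          apply mul_nonneg hC0 (by linarith)
        have h5 : 0 ≤ C * A n * (Real.exp 1 - 1) * (P - 1) := by
          apply mul_nonneg _ (by linarith)
          apply mul_nonneg (mul_nonneg hC0 (hA0 n)) hd.le
        nlinarith [hA0 n, mul_pos hEpos hs0]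
  intro t
  refine (main t).trans ?_
  have hexpL : Real.exp (Λ t) ≤ Real.exp L := Real.exp_le_exp.2 (hΛL t)
  have h1 : Real.exp (-(t:ℝ)/H) * Real.exp (Λ t) * s 0
      ≤ Real.exp (-(t:ℝ)/H) * Real.exp L * s 0 := by
    apply mul_le_mul_of_nonneg_right _ hs0.le
    exact mul_le_mul_of_nonneg_left hexpL (Real.exp_pos _).le
  have h2 : W * ((Real.exp (Λ t) + Real.exp 1 - 1)/(Real.exp 1 - 1))
      ≤ W * ((Real.exp L + Real.exp 1 - 1)/(Real.exp 1 - 1)) := by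
    apply mul_le_mul_of_nonneg_left _ hW
    gcongr
  linarith
end

section
/- For arbitrary real matrices X, Y ∈ ℝ^{n×m}, the identity X X⁺ − Y Y⁺ = (I − X X⁺)(X − Y) Y⁺ + [(I − Y Y⁺)(X − Y) X⁺]ᵀ holds. -/
open Matrix

/-- `Xp` is the Moore–Penrose pseudoinverse of `X`: the four Penrose conditions. -/
def IsMoorePenrose {n m : ℕ} (X : Matrix (Fin n) (Fin m) ℝ)
    (Xp : Matrix (Fin m) (Fin n) ℝ) : Prop :=
  X * Xp * X = X ∧ Xp * X * Xp = Xp ∧ (X * Xp)ᵀ = X * Xp ∧ (Xp * X)ᵀ = Xp * X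

/-- For arbitrary real matrices `X, Y ∈ ℝ^{n×m}`:
`X X⁺ − Y Y⁺ = (I − X X⁺)(X − Y) Y⁺ + [(I − Y Y⁺)(X − Y) X⁺]ᵀ`. -/
theorem pseudoinverse_projection_difference_identity
    {n m : ℕ} (X Y : Matrix (Fin n) (Fin m) ℝ) (Xp Yp : Matrix (Fin m) (Fin n) ℝ)
    (hX : IsMoorePenrose X Xp) (hY : IsMoorePenrose Y Yp) :
    X * Xp - Y * Yp = (1 - X * Xp) * (X - Y) * Yp + ((1 - Y * Yp) * (X - Y) * Xp)ᵀ := by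
  obtain ⟨hX1, -, hX3, -⟩ := hX
  obtain ⟨hY1, -, hY3, -⟩ := hY
  have e1 : (1 - X * Xp) * (X - Y) * Yp = X * Xp * (Y * Yp) - Y * Yp := by
    have h : (1 - X * Xp) * (X - Y) = X * Xp * Y - Y := by
      simp only [Matrix.sub_mul, Matrix.mul_sub, Matrix.one_mul, hX1]
      abel
    rw [h, Matrix.sub_mul, Matrix.mul_assoc]
  have e2 : (1 - Y * Yp) * (X - Y) * Xp = X * Xp - Y * Yp * (X * Xp) := by
    have h : (1 - Y * Yp) * (X - Y) = X - Y * Yp * X := by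
      simp only [Matrix.sub_mul, Matrix.mul_sub, Matrix.one_mul, hY1]
      abel
    rw [h, Matrix.sub_mul, Matrix.mul_assoc]
  rw [e1, e2]
  rw [Matrix.transpose_sub, hX3, Matrix.transpose_mul, hX3, hY3]
  abel
end

section
/- For arbitrary real matrices X, Y ∈ ℝ^{n×m}, the orthogonal projections onto their column spaces satisfy ‖X X⁺ − Y Y⁺‖₂ ≤ ‖X − Y‖₂ · (‖X⁺‖₂ + ‖Y⁺‖₂). -/
open Matrix
open scoped Matrix.Norms.L2Operator

lemma proj_opNorm_le_one {k : ℕ} (R : Matrix (Fin k) (Fin k) ℝ)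
    (h1 : R * R = R) (h2 : Rᵀ = R) : ‖R‖ ≤ 1 := by
  have hH : Rᴴ = R := by rw [Matrix.conjTranspose_eq_transpose_of_trivial, h2]
  have hm := Matrix.l2_opNorm_conjTranspose_mul_self R
  rw [hH, h1] at hm
  nlinarith [norm_nonneg R]

lemma transpose_opNorm {a b : ℕ} (A : Matrix (Fin a) (Fin b) ℝ) : ‖Aᵀ‖ = ‖A‖ := by
  rw [← Matrix.conjTranspose_eq_transpose_of_trivial, Matrix.l2_opNorm_conjTranspose]

/-- For arbitrary real matrices `X, Y ∈ ℝ^{n×m}`, the orthogonal projections onto their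
column spaces satisfy `‖X X⁺ − Y Y⁺‖₂ ≤ ‖X − Y‖₂ (‖X⁺‖₂ + ‖Y⁺‖₂)`, where `‖·‖₂` is the operator
norm induced by the Euclidean vector norms (the scoped `Matrix.L2OpNorm` norm). -/
theorem pseudoinverse_projection_difference_opNorm_bound
    {n m : ℕ} (X Y : Matrix (Fin n) (Fin m) ℝ) (Xp Yp : Matrix (Fin m) (Fin n) ℝ)
    (hX : IsMoorePenrose X Xp) (hY : IsMoorePenrose Y Yp) :
    ‖X * Xp - Y * Yp‖ ≤ ‖X - Y‖ * (‖Xp‖ + ‖Yp‖) := by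
  obtain ⟨hX1, hX2, hX3, hX4⟩ := hX
  obtain ⟨hY1, hY2, hY3, hY4⟩ := hY
  have h1 : (1 - X * Xp) * ((X - Y) * Yp) = X * Xp * (Y * Yp) - Y * Yp := by
    simp only [Matrix.sub_mul, Matrix.mul_sub, Matrix.one_mul, ← Matrix.mul_assoc, hX1]
    abel
  have h2 : (1 - Y * Yp) * ((X - Y) * Xp) = X * Xp - Y * Yp * (X * Xp) := by
    simp only [Matrix.sub_mul, Matrix.mul_sub, Matrix.one_mul, ← Matrix.mul_assoc, hY1]
    abel
  have key : X * Xp - Y * Yp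
      = (1 - Y * Yp) * ((X - Y) * Xp) + ((1 - X * Xp) * ((X - Y) * Yp))ᵀ := by
    rw [h1, h2, Matrix.transpose_sub, Matrix.transpose_mul, hX3, hY3]
    abel
  -- projection norms
  have hPn : ‖(1 : Matrix (Fin n) (Fin n) ℝ) - X * Xp‖ ≤ 1 := by
    apply proj_opNorm_le_one
    · simp only [Matrix.mul_sub, Matrix.sub_mul, Matrix.one_mul, Matrix.mul_one,
        ← Matrix.mul_assoc]
      rw [Matrix.mul_assoc X Xp X, Matrix.mul_assoc, hX2]
      abel
    · rw [Matrix.transpose_sub, Matrix.transpose_one, hX3]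
  have hQn : ‖(1 : Matrix (Fin n) (Fin n) ℝ) - Y * Yp‖ ≤ 1 := by
    apply proj_opNorm_le_one
    · simp only [Matrix.mul_sub, Matrix.sub_mul, Matrix.one_mul, Matrix.mul_one,
        ← Matrix.mul_assoc]
      rw [Matrix.mul_assoc Y Yp Y, Matrix.mul_assoc, hY2]
      abel
    · rw [Matrix.transpose_sub, Matrix.transpose_one, hY3]
  have b1 : ‖(1 - Y * Yp) * ((X - Y) * Xp)‖ ≤ ‖X - Y‖ * ‖Xp‖ := by
    calc ‖(1 - Y * Yp) * ((X - Y) * Xp)‖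
        ≤ ‖(1 : Matrix (Fin n) (Fin n) ℝ) - Y * Yp‖ * ‖(X - Y) * Xp‖ :=
          Matrix.l2_opNorm_mul _ _
      _ ≤ 1 * (‖X - Y‖ * ‖Xp‖) := by
          exact mul_le_mul hQn (Matrix.l2_opNorm_mul _ _) (norm_nonneg _) zero_le_one
      _ = ‖X - Y‖ * ‖Xp‖ := one_mul _
  have b2 : ‖((1 - X * Xp) * ((X - Y) * Yp))ᵀ‖ ≤ ‖X - Y‖ * ‖Yp‖ := by
    rw [transpose_opNorm]
    calc ‖(1 - X * Xp) * ((X - Y) * Yp)‖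
        ≤ ‖(1 : Matrix (Fin n) (Fin n) ℝ) - X * Xp‖ * ‖(X - Y) * Yp‖ :=
          Matrix.l2_opNorm_mul _ _
      _ ≤ 1 * (‖X - Y‖ * ‖Yp‖) := by
          exact mul_le_mul hPn (Matrix.l2_opNorm_mul _ _) (norm_nonneg _) zero_le_one
      _ = ‖X - Y‖ * ‖Yp‖ := one_mul _
  calc ‖X * Xp - Y * Yp‖
      = ‖(1 - Y * Yp) * ((X - Y) * Xp) + ((1 - X * Xp) * ((X - Y) * Yp))ᵀ‖ := by rw [← key]
    _ ≤ ‖(1 - Y * Yp) * ((X - Y) * Xp)‖ + ‖((1 - X * Xp) * ((X - Y) * Yp))ᵀ‖ := norm_add_le _ _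
    _ ≤ ‖X - Y‖ * ‖Xp‖ + ‖X - Y‖ * ‖Yp‖ := add_le_add b1 b2
    _ = ‖X - Y‖ * (‖Xp‖ + ‖Yp‖) := by ring
end

section
/- Let H ≥ 1 and let A₁, A₂ ∈ ℝ^{n×n}. Then ‖G_w(A₁) − G_w(A₂)‖₂ ≤ ‖G_w(A₁)‖₂ · ‖G_w(A₂)‖₂ · ‖A₁ − A₂‖₂. -/
open Matrix
open scoped Matrix.Norms.L2Operator

/-- The block lower-triangular Toeplitz matrix `G_w(A) ∈ ℝ^{Hn×Hn}` whose `(i,j)` block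
(for `j ≤ i`) is `A^{i−j}` and whose blocks above the block diagonal are zero. -/
def Gw {n : ℕ} (H : ℕ) (A : Matrix (Fin n) (Fin n) ℝ) :
    Matrix (Fin H × Fin n) (Fin H × Fin n) ℝ :=
  Matrix.of fun p q =>
    if (q.1 : ℕ) ≤ (p.1 : ℕ) then (A ^ ((p.1 : ℕ) - (q.1 : ℕ))) p.2 q.2 else 0

/-- The block sub-diagonal matrix whose `(i+1, i)` block is `M`. -/
def GwDelta {n : ℕ} (H : ℕ) (M : Matrix (Fin n) (Fin n) ℝ) :
    Matrix (Fin H × Fin n) (Fin H × Fin n) ℝ :=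
  Matrix.of fun p q => if (p.1 : ℕ) = (q.1 : ℕ) + 1 then M p.2 q.2 else 0

lemma Gw_sub_one {n : ℕ} (H : ℕ) (A : Matrix (Fin n) (Fin n) ℝ) :
    Gw H A - 1 = Matrix.of fun p q =>
      if (q.1 : ℕ) < (p.1 : ℕ) then (A ^ ((p.1 : ℕ) - (q.1 : ℕ))) p.2 q.2 else 0 := by
  ext ⟨p₁, p₂⟩ ⟨q₁, q₂⟩
  simp only [Matrix.sub_apply, Gw, Matrix.of_apply, Matrix.one_apply, Prod.mk.injEq]
  rcases lt_trichotomy (q₁ : ℕ) (p₁ : ℕ) with h | h | h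
  · have h1 : (q₁ : ℕ) ≤ (p₁ : ℕ) := h.le
    have h2 : ¬ (p₁ = q₁) := fun hc => by simp [hc] at h
    simp [h1, h, h2]
  · have h1 : p₁ = q₁ := Fin.ext h.symm
    have h2 : ¬ ((q₁ : ℕ) < (p₁ : ℕ)) := by omega
    simp only [le_refl, if_pos, h2, if_neg, not_false_iff, h1, true_and, pow_zero,
      Matrix.one_apply, h]
    split <;> simp_all
  · have h1 : ¬ ((q₁ : ℕ) ≤ (p₁ : ℕ)) := by omega
    have h2 : ¬ ((q₁ : ℕ) < (p₁ : ℕ)) := by omega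
    have h3 : ¬ (p₁ = q₁) := fun hc => by simp [hc] at h1
    simp [h1, h2, h3]

lemma Gw_mul_delta {n : ℕ} (H : ℕ) (A : Matrix (Fin n) (Fin n) ℝ) :
    Gw H A * GwDelta H A = Gw H A - 1 := by
  rw [Gw_sub_one]
  ext ⟨p₁, p₂⟩ ⟨q₁, q₂⟩
  rw [Matrix.mul_apply, Fintype.sum_prod_type]
  simp only [Gw, GwDelta, Matrix.of_apply]
  by_cases hq : (q₁ : ℕ) + 1 < H
  · rw [Finset.sum_eq_single (⟨(q₁ : ℕ) + 1, hq⟩ : Fin H)]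
    · by_cases hp : (q₁ : ℕ) < (p₁ : ℕ)
      · have h1 : ((⟨(q₁ : ℕ) + 1, hq⟩ : Fin H) : ℕ) ≤ (p₁ : ℕ) := hp
        simp only [h1, if_pos, hp]
        rw [← Matrix.mul_apply, ← pow_succ]
        have he : (p₁ : ℕ) - ((q₁ : ℕ) + 1) + 1 = (p₁ : ℕ) - (q₁ : ℕ) := by omega
        rw [he]
      · have h1 : ¬ (((⟨(q₁ : ℕ) + 1, hq⟩ : Fin H) : ℕ) ≤ (p₁ : ℕ)) := by
          simp only [Fin.val_mk]; omega
        simp [h1, hp]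
    · intro r₁ _ hr₁
      have : ¬ ((r₁ : ℕ) = (q₁ : ℕ) + 1) := fun hc => hr₁ (Fin.ext (by simp [hc]))
      simp [this]
    · intro h; exact absurd (Finset.mem_univ _) h
  · have hp : ¬ ((q₁ : ℕ) < (p₁ : ℕ)) := by have := p₁.isLt; omega
    rw [if_neg hp]
    refine Finset.sum_eq_zero fun r₁ _ => Finset.sum_eq_zero fun r₂ _ => ?_
    have : ¬ ((r₁ : ℕ) = (q₁ : ℕ) + 1) := by have := r₁.isLt; omega
    simp [this]

lemma Gw_inv_right {n : ℕ} (H : ℕ) (A : Matrix (Fin n) (Fin n) ℝ) :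
    Gw H A * (1 - GwDelta H A) = 1 := by
  rw [mul_sub, mul_one, Gw_mul_delta, sub_sub_cancel]

lemma Gw_inv_left {n : ℕ} (H : ℕ) (A : Matrix (Fin n) (Fin n) ℝ) :
    (1 - GwDelta H A) * Gw H A = 1 :=
  mul_eq_one_comm.mp (Gw_inv_right H A)

lemma delta_mul_Gw {n : ℕ} (H : ℕ) (A : Matrix (Fin n) (Fin n) ℝ) :
    GwDelta H A * Gw H A = Gw H A - 1 := by
  have h := Gw_inv_left H A
  rw [sub_mul, one_mul] at h
  linear_combination (norm := noncomm_ring) -h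

lemma GwDelta_sub {n : ℕ} (H : ℕ) (A₁ A₂ : Matrix (Fin n) (Fin n) ℝ) :
    GwDelta H (A₁ - A₂) = GwDelta H A₁ - GwDelta H A₂ := by
  ext ⟨p₁, p₂⟩ ⟨q₁, q₂⟩
  simp only [GwDelta, Matrix.of_apply, Matrix.sub_apply]
  split <;> simp

lemma Gw_diff_factor {n : ℕ} (H : ℕ) (A₁ A₂ : Matrix (Fin n) (Fin n) ℝ) :
    Gw H A₁ - Gw H A₂ = Gw H A₁ * GwDelta H (A₁ - A₂) * Gw H A₂ := by
  rw [GwDelta_sub]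
  have h1 : Gw H A₁ * GwDelta H A₁ = Gw H A₁ - 1 := Gw_mul_delta H A₁
  have h2 : GwDelta H A₂ * Gw H A₂ = Gw H A₂ - 1 := delta_mul_Gw H A₂
  have expand : Gw H A₁ * (GwDelta H A₁ - GwDelta H A₂) * Gw H A₂ =
      (Gw H A₁ * GwDelta H A₁) * Gw H A₂ - Gw H A₁ * (GwDelta H A₂ * Gw H A₂) := by
    noncomm_ring
  rw [expand, h1, h2]
  noncomm_ring

lemma GwDelta_norm_le {n : ℕ} (H : ℕ) (M : Matrix (Fin n) (Fin n) ℝ) :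
    ‖GwDelta H M‖ ≤ ‖M‖ := by
  classical
  rw [Matrix.l2_opNorm_def]
  refine ContinuousLinearMap.opNorm_le_bound _ (norm_nonneg M) fun x => ?_
  set y : EuclideanSpace ℝ (Fin H × Fin n) :=
    (EuclideanSpace.equiv (Fin H × Fin n) ℝ).symm (GwDelta H M *ᵥ x) with hy
  have hale : ((Matrix.toEuclideanLin.trans LinearMap.toContinuousLinearMap) (GwDelta H M)) x
      = y := rfl
  rw [hale, EuclideanSpace.norm_eq]
  set xr : Fin H → EuclideanSpace ℝ (Fin n) :=
    fun h => (EuclideanSpace.equiv (Fin n) ℝ).symm (fun j => x (h, j)) with hxr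
  set g : ℕ → ℝ := fun k =>
    if hk : k < H then ‖(EuclideanSpace.equiv (Fin n) ℝ).symm (M *ᵥ xr ⟨k, hk⟩)‖ ^ 2 else 0
    with hg
  have hg0 : ∀ k, 0 ≤ g k := by
    intro k; rw [hg]; dsimp only; split
    · positivity
    · exact le_refl 0
  have hyent : ∀ (p₁ : Fin H) (p₂ : Fin n) (hk : (p₁ : ℕ) - 1 < H), 1 ≤ (p₁ : ℕ) →
      y (p₁, p₂) = (M *ᵥ xr ⟨(p₁ : ℕ) - 1, hk⟩) p₂ := by
    intro p₁ p₂ hk h1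
    show (GwDelta H M *ᵥ x) (p₁, p₂) = _
    rw [Matrix.mulVec, Matrix.mulVec, dotProduct, dotProduct,
      Fintype.sum_prod_type]
    rw [Finset.sum_eq_single (⟨(p₁ : ℕ) - 1, hk⟩ : Fin H)]
    · refine Finset.sum_congr rfl fun q₂ _ => ?_
      have hc : (p₁ : ℕ) = ((⟨(p₁ : ℕ) - 1, hk⟩ : Fin H) : ℕ) + 1 := by
        simp only [Fin.val_mk]; omega
      simp only [GwDelta, Matrix.of_apply]
      rw [if_pos hc]
      rfl
    · intro q₁ _ hq₁
      refine Finset.sum_eq_zero fun q₂ _ => ?_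
      have hc : ¬ ((p₁ : ℕ) = (q₁ : ℕ) + 1) := by
        intro hcon
        exact hq₁ (Fin.ext (by simp only [Fin.val_mk]; omega))
      simp [GwDelta, hc]
    · intro h; exact absurd (Finset.mem_univ _) h
  have hrow : ∀ p₁ : Fin H, (∑ p₂ : Fin n, ‖y (p₁, p₂)‖ ^ 2)
      = if 1 ≤ (p₁ : ℕ) then g ((p₁ : ℕ) - 1) else 0 := by
    intro p₁
    by_cases h : 1 ≤ (p₁ : ℕ)
    · have hk : (p₁ : ℕ) - 1 < H := lt_of_le_of_lt (Nat.sub_le _ _) p₁.isLt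
      rw [if_pos h, hg]
      dsimp only
      rw [dif_pos hk, EuclideanSpace.norm_eq, Real.sq_sqrt (by positivity)]
      exact Finset.sum_congr rfl fun p₂ _ => by rw [hyent p₁ p₂ hk h]; rfl
    · rw [if_neg h]
      refine Finset.sum_eq_zero fun p₂ _ => ?_
      have : y (p₁, p₂) = 0 := by
        show (GwDelta H M *ᵥ x) (p₁, p₂) = 0
        rw [Matrix.mulVec, dotProduct]
        refine Finset.sum_eq_zero fun q _ => ?_
        have hc : ¬ ((p₁ : ℕ) = (q.1 : ℕ) + 1) := by omega
        simp [GwDelta, hc]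
      simp [this]
  have hsum : ∑ p : Fin H × Fin n, ‖y p‖ ^ 2
      = ∑ p₁ : Fin H, (if 1 ≤ (p₁ : ℕ) then g ((p₁ : ℕ) - 1) else 0) := by
    rw [Fintype.sum_prod_type]
    exact Finset.sum_congr rfl fun p₁ _ => hrow p₁
  have hshift : ∑ p₁ : Fin H, (if 1 ≤ (p₁ : ℕ) then g ((p₁ : ℕ) - 1) else 0)
      ≤ ∑ k ∈ Finset.range H, g k := by
    rw [Fin.sum_univ_eq_sum_range (fun k => if 1 ≤ k then g (k - 1) else 0) H]
    cases H with
    | zero => simp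
    | succ m =>
      rw [Finset.sum_range_succ']
      have h0 : (if (1:ℕ) ≤ 0 then g (0 - 1) else 0) = 0 := if_neg (by omega)
      have h1 : ∀ i, (if 1 ≤ i + 1 then g (i + 1 - 1) else 0) = g i := fun i => by
        rw [if_pos (by omega)]; exact congrArg g (by omega)
      rw [Finset.sum_congr rfl fun i _ => h1 i, h0, add_zero]
      exact Finset.sum_le_sum_of_subset_of_nonneg
        (Finset.range_subset_range.mpr (Nat.le_succ m)) (fun i _ _ => hg0 i)
  have hback : ∑ k ∈ Finset.range H, g k
      = ∑ p₁ : Fin H, ‖(EuclideanSpace.equiv (Fin n) ℝ).symm (M *ᵥ xr p₁)‖ ^ 2 := by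
    rw [← Fin.sum_univ_eq_sum_range g H]
    refine Finset.sum_congr rfl fun p₁ _ => ?_
    rw [hg]
    dsimp only
    rw [dif_pos p₁.isLt]
  have hterm : ∑ p₁ : Fin H, ‖(EuclideanSpace.equiv (Fin n) ℝ).symm (M *ᵥ xr p₁)‖ ^ 2
      ≤ ∑ p₁ : Fin H, ‖M‖ ^ 2 * ‖xr p₁‖ ^ 2 := by
    refine Finset.sum_le_sum fun p₁ _ => ?_
    have h := Matrix.l2_opNorm_mulVec M (xr p₁)
    calc ‖(EuclideanSpace.equiv (Fin n) ℝ).symm (M *ᵥ xr p₁)‖ ^ 2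
        ≤ (‖M‖ * ‖xr p₁‖) ^ 2 := by
          exact pow_le_pow_left₀ (norm_nonneg _) h 2
      _ = ‖M‖ ^ 2 * ‖xr p₁‖ ^ 2 := by ring
  have hxnorm : ∑ p₁ : Fin H, ‖xr p₁‖ ^ 2 = ‖x‖ ^ 2 := by
    rw [EuclideanSpace.norm_eq x, Real.sq_sqrt (by positivity), Fintype.sum_prod_type]
    refine Finset.sum_congr rfl fun p₁ _ => ?_
    rw [EuclideanSpace.norm_eq (xr p₁), Real.sq_sqrt (by positivity)]
    exact Finset.sum_congr rfl fun j _ => rfl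
  have key : ∑ p : Fin H × Fin n, ‖y p‖ ^ 2 ≤ (‖M‖ * ‖x‖) ^ 2 := by
    calc ∑ p : Fin H × Fin n, ‖y p‖ ^ 2
        = ∑ p₁ : Fin H, (if 1 ≤ (p₁ : ℕ) then g ((p₁ : ℕ) - 1) else 0) := hsum
      _ ≤ ∑ k ∈ Finset.range H, g k := hshift
      _ = ∑ p₁ : Fin H, ‖(EuclideanSpace.equiv (Fin n) ℝ).symm (M *ᵥ xr p₁)‖ ^ 2 := hback
      _ ≤ ∑ p₁ : Fin H, ‖M‖ ^ 2 * ‖xr p₁‖ ^ 2 := hterm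
      _ = ‖M‖ ^ 2 * ∑ p₁ : Fin H, ‖xr p₁‖ ^ 2 := by rw [Finset.mul_sum]
      _ = ‖M‖ ^ 2 * ‖x‖ ^ 2 := by rw [hxnorm]
      _ = (‖M‖ * ‖x‖) ^ 2 := by ring
  calc Real.sqrt (∑ p : Fin H × Fin n, ‖y p‖ ^ 2)
      ≤ Real.sqrt ((‖M‖ * ‖x‖) ^ 2) := Real.sqrt_le_sqrt key
    _ = ‖M‖ * ‖x‖ := Real.sqrt_sq (by positivity)

/-- For `H ≥ 1` and `A₁, A₂ ∈ ℝ^{n×n}`: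
`‖G_w(A₁) − G_w(A₂)‖₂ ≤ ‖G_w(A₁)‖₂ ‖G_w(A₂)‖₂ ‖A₁ − A₂‖₂`, with `‖·‖₂` the operator norm
induced by the Euclidean vector norm. -/
theorem Gw_diff_opNorm_bound
    {n : ℕ} (H : ℕ) (hH : 1 ≤ H) (A₁ A₂ : Matrix (Fin n) (Fin n) ℝ) :
    ‖Gw H A₁ - Gw H A₂‖ ≤ ‖Gw H A₁‖ * ‖Gw H A₂‖ * ‖A₁ - A₂‖ := by
  rw [Gw_diff_factor]
  calc ‖Gw H A₁ * GwDelta H (A₁ - A₂) * Gw H A₂‖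
      ≤ ‖Gw H A₁ * GwDelta H (A₁ - A₂)‖ * ‖Gw H A₂‖ := Matrix.l2_opNorm_mul _ _
    _ ≤ ‖Gw H A₁‖ * ‖GwDelta H (A₁ - A₂)‖ * ‖Gw H A₂‖ :=
        mul_le_mul_of_nonneg_right (Matrix.l2_opNorm_mul _ _) (norm_nonneg _)
    _ ≤ ‖Gw H A₁‖ * ‖A₁ - A₂‖ * ‖Gw H A₂‖ :=
        mul_le_mul_of_nonneg_right
          (mul_le_mul_of_nonneg_left (GwDelta_norm_le H _) (norm_nonneg _)) (norm_nonneg _)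
    _ = ‖Gw H A₁‖ * ‖Gw H A₂‖ * ‖A₁ - A₂‖ := by ring
end

section
/- Let H ≥ 1, let A₁, A₂ ∈ ℝ^{n×n} and B₁, B₂ ∈ ℝ^{n×m}. Then ‖G_u(A₁,B₁) − G_u(A₂,B₂)‖₂ ≤ ‖B₁‖₂ · ‖G_w(A₁)‖₂ · ‖G_w(A₂)‖₂ · ‖A₁ − A₂‖₂ + ‖G_w(A₂)‖₂ · ‖B₁ − B₂‖₂. -/
open Matrix
open scoped Matrix.Norms.L2Operator

/-- The block lower-triangular Toeplitz matrix `G_u(A,B) ∈ ℝ^{Hn×Hm}` whose `(i,j)` block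
(for `j ≤ i`) is `A^{i−j}B` and whose blocks above the block diagonal are zero. -/
def Gu {n m : ℕ} (H : ℕ) (A : Matrix (Fin n) (Fin n) ℝ) (B : Matrix (Fin n) (Fin m) ℝ) :
    Matrix (Fin H × Fin n) (Fin H × Fin m) ℝ :=
  Matrix.of fun p q =>
    if (q.1 : ℕ) ≤ (p.1 : ℕ) then (A ^ ((p.1 : ℕ) - (q.1 : ℕ)) * B) p.2 q.2 else 0

namespace GuAux

def blk {H H' n m : ℕ} (f : Fin H → Option (Fin H')) (C : Matrix (Fin n) (Fin m) ℝ) :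
    Matrix (Fin H × Fin n) (Fin H' × Fin m) ℝ :=
  Matrix.of fun p q => if f p.1 = some q.1 then C p.2 q.2 else 0


lemma mulVec_sq_sum_le {n m : ℕ} (C : Matrix (Fin n) (Fin m) ℝ) (w : Fin m → ℝ) :
    ∑ a : Fin n, ((C *ᵥ w) a) ^ 2 ≤ ‖C‖ ^ 2 * ∑ b : Fin m, (w b) ^ 2 := by
  have h0 : (0:ℝ) ≤ ∑ a : Fin n, ((C *ᵥ w) a) ^ 2 := Finset.sum_nonneg fun _ _ => sq_nonneg _
  have h0' : (0:ℝ) ≤ ∑ b : Fin m, (w b) ^ 2 := Finset.sum_nonneg fun _ _ => sq_nonneg _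
  have key : Real.sqrt (∑ a : Fin n, ((C *ᵥ w) a) ^ 2)
      ≤ ‖C‖ * Real.sqrt (∑ b : Fin m, (w b) ^ 2) := by
    have h' := C.l2_opNorm_mulVec ((WithLp.equiv 2 _).symm w)
    rw [EuclideanSpace.norm_eq, EuclideanSpace.norm_eq] at h'
    simpa [Real.norm_eq_abs, sq_abs] using h'
  calc ∑ a : Fin n, ((C *ᵥ w) a) ^ 2
      = (Real.sqrt (∑ a : Fin n, ((C *ᵥ w) a) ^ 2)) ^ 2 := (Real.sq_sqrt h0).symm
    _ ≤ (‖C‖ * Real.sqrt (∑ b : Fin m, (w b) ^ 2)) ^ 2 :=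
        pow_le_pow_left₀ (Real.sqrt_nonneg _) key 2
    _ = ‖C‖ ^ 2 * ∑ b : Fin m, (w b) ^ 2 := by rw [mul_pow, Real.sq_sqrt h0']

lemma blk_mulVec {H H' n m : ℕ} (f : Fin H → Option (Fin H'))
    (C : Matrix (Fin n) (Fin m) ℝ) (v : (Fin H' × Fin m) → ℝ) (i : Fin H) (a : Fin n) :
    (blk f C *ᵥ v) (i, a) = (f i).elim 0 (fun k => (C *ᵥ fun b => v (k, b)) a) := by
  cases hfi : f i with
  | none => simp [mulVec, dotProduct, blk, hfi, Fintype.sum_prod_type]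
  | some k => simp [mulVec, dotProduct, blk, hfi, Fintype.sum_prod_type, eq_comm]


lemma blk_opNorm_le {H H' n m : ℕ} (f : Fin H → Option (Fin H'))
    (hf : Function.Injective f) (C : Matrix (Fin n) (Fin m) ℝ) :
    ‖blk f C‖ ≤ ‖C‖ := by
  rw [Matrix.l2_opNorm_def]
  refine ContinuousLinearMap.opNorm_le_bound _ (norm_nonneg C) fun x => ?_
  set v : (Fin H' × Fin m) → ℝ := WithLp.equiv 2 _ x with hv
  have h1 : ‖(toEuclideanLin.trans LinearMap.toContinuousLinearMap (blk f C)) x‖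
      = Real.sqrt (∑ p : Fin H × Fin n, ((blk f C *ᵥ v) p) ^ 2) := by
    rw [EuclideanSpace.norm_eq]
    congr 1
    exact Finset.sum_congr rfl fun p _ => by simp [Real.norm_eq_abs, sq_abs]; rfl
  have h2 : ‖x‖ = Real.sqrt (∑ q : Fin H' × Fin m, (v q) ^ 2) := by
    rw [EuclideanSpace.norm_eq]
    simp [Real.norm_eq_abs, sq_abs, hv]
  set g : Fin H' → ℝ := fun k => ‖C‖ ^ 2 * ∑ b : Fin m, (v (k, b)) ^ 2 with hg
  have hgnn : ∀ k, 0 ≤ g k := fun k =>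
    mul_nonneg (sq_nonneg _) (Finset.sum_nonneg fun _ _ => sq_nonneg _)
  have hrow : ∀ i : Fin H, ∑ a : Fin n, ((blk f C *ᵥ v) (i, a)) ^ 2 ≤ (f i).elim 0 g := by
    intro i
    cases hfi : f i with
    | none => simp [blk_mulVec, hfi]
    | some k =>
      simp only [blk_mulVec, hfi, Option.elim, hg]
      exact mulVec_sq_sum_le C _
  have hsum : ∑ p : Fin H × Fin n, ((blk f C *ᵥ v) p) ^ 2
      ≤ ‖C‖ ^ 2 * ∑ q : Fin H' × Fin m, (v q) ^ 2 := by
    rw [Fintype.sum_prod_type]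
    calc ∑ i : Fin H, ∑ a : Fin n, ((blk f C *ᵥ v) (i, a)) ^ 2
        ≤ ∑ i : Fin H, (f i).elim 0 g := Finset.sum_le_sum fun i _ => hrow i
      _ = ∑ o ∈ Finset.univ.image f, o.elim 0 g :=
          (Finset.sum_image (f := fun o => Option.elim o 0 g) (g := f) (fun a _ b _ h => hf h)).symm
      _ ≤ ∑ o : Option (Fin H'), o.elim 0 g := by
          refine Finset.sum_le_sum_of_subset_of_nonneg (Finset.subset_univ _)
            (fun o _ _ => ?_)
          cases o with
          | none => simp
          | some k => exact hgnn k
      _ = ∑ k : Fin H', g k := by simp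
      _ = ‖C‖ ^ 2 * ∑ q : Fin H' × Fin m, (v q) ^ 2 := by
          rw [Fintype.sum_prod_type, Finset.mul_sum]
  rw [h1, h2]
  calc Real.sqrt (∑ p : Fin H × Fin n, ((blk f C *ᵥ v) p) ^ 2)
      ≤ Real.sqrt (‖C‖ ^ 2 * ∑ q : Fin H' × Fin m, (v q) ^ 2) := Real.sqrt_le_sqrt hsum
    _ = ‖C‖ * Real.sqrt (∑ q : Fin H' × Fin m, (v q) ^ 2) := by
        rw [Real.sqrt_mul (sq_nonneg _), Real.sqrt_sq (norm_nonneg _)]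


def fshift (H : ℕ) : Fin H → Option (Fin H) := fun i =>
  if (i : ℕ) = 0 then none
  else some ⟨(i : ℕ) - 1, lt_of_le_of_lt (Nat.sub_le _ _) i.isLt⟩

lemma fshift_inj (H : ℕ) : Function.Injective (fshift H) := by
  intro i j hij
  unfold fshift at hij
  split_ifs at hij with h1 h2 h2 <;> simp_all [Fin.ext_iff] <;> omega

lemma gu_eq {n m : ℕ} (H : ℕ) (A : Matrix (Fin n) (Fin n) ℝ) (B : Matrix (Fin n) (Fin m) ℝ) :
    Gu H A B = Gw H A * blk (fun i : Fin H => some i) B := by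
  ext ⟨i, a⟩ ⟨j, b⟩
  simp only [Gu, Gw, blk, of_apply, mul_apply, Fintype.sum_prod_type, Option.some.injEq,
    mul_ite, mul_zero, ite_mul, zero_mul]
  rw [Finset.sum_comm]
  simp [Finset.sum_ite_eq', Matrix.mul_apply]


lemma blk_mul {H H' K n m l : ℕ} (f : Fin H → Option (Fin H')) (C : Matrix (Fin n) (Fin m) ℝ)
    (M : Matrix (Fin H' × Fin m) (Fin K × Fin l) ℝ) (i : Fin H) (a : Fin n) (q : Fin K × Fin l) :
    (blk f C * M) (i, a) q = (f i).elim 0 (fun k => ∑ c : Fin m, C a c * M (k, c) q) := by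
  cases hfi : f i with
  | none => simp [mul_apply, blk, hfi, Fintype.sum_prod_type]
  | some k => simp [mul_apply, blk, hfi, Fintype.sum_prod_type, eq_comm]

lemma one_sub_mul {n : ℕ} (H : ℕ) (A : Matrix (Fin n) (Fin n) ℝ) :
    (1 - blk (fshift H) A) * Gw H A = 1 := by
  ext ⟨i, a⟩ ⟨j, b⟩
  rw [Matrix.sub_mul, Matrix.one_mul, Matrix.sub_apply]
  have hprod : (blk (fshift H) A * Gw H A) (i, a) (j, b)
      = if (i:ℕ) ≠ 0 ∧ (j:ℕ) ≤ (i:ℕ) - 1 then (A * A ^ ((i:ℕ) - 1 - (j:ℕ))) a b else 0 := by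
    rw [blk_mul]
    by_cases hi : (i:ℕ) = 0
    · simp [fshift, hi]
    · rw [show fshift H i = some ⟨(i:ℕ) - 1, lt_of_le_of_lt (Nat.sub_le _ _) i.isLt⟩
        from if_neg hi]
      simp only [Option.elim, Gw, of_apply]
      by_cases hj : (j:ℕ) ≤ (i:ℕ) - 1
      · rw [if_pos (by exact ⟨hi, hj⟩), Matrix.mul_apply]
        exact Finset.sum_congr rfl fun c _ => by rw [if_pos hj]
      · rw [if_neg (by tauto)]
        exact Finset.sum_eq_zero fun c _ => by rw [if_neg hj, mul_zero]
  rw [hprod]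
  by_cases hij : (i:ℕ) = (j:ℕ)
  · have : ¬((i:ℕ) ≠ 0 ∧ (j:ℕ) ≤ (i:ℕ) - 1) := by omega
    rw [if_neg this, Gw]
    simp only [of_apply, hij, le_refl, if_pos, Nat.sub_self, pow_zero, sub_zero]
    have hij' : i = j := Fin.ext hij
    subst hij'
    simp [Matrix.one_apply, Prod.ext_iff, Fin.ext_iff]
  · rw [Gw]
    simp only [of_apply]
    by_cases hle : (j:ℕ) ≤ (i:ℕ)
    · have hlt : (j:ℕ) < (i:ℕ) := lt_of_le_of_ne hle (Ne.symm hij)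
      have h1 : (i:ℕ) ≠ 0 ∧ (j:ℕ) ≤ (i:ℕ) - 1 := by omega
      rw [if_pos hle, if_pos h1]
      have hpow : (i:ℕ) - (j:ℕ) = ((i:ℕ) - 1 - (j:ℕ)) + 1 := by omega
      rw [hpow, pow_succ']
      have : (1 : Matrix (Fin H × Fin n) (Fin H × Fin n) ℝ) (i, a) (j, b) = 0 := by
        simp [Matrix.one_apply, Prod.ext_iff, Fin.ext_iff, hij]
      rw [this, sub_self]
    · have h1 : ¬((i:ℕ) ≠ 0 ∧ (j:ℕ) ≤ (i:ℕ) - 1) := by omega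
      rw [if_neg hle, if_neg h1]
      have : (1 : Matrix (Fin H × Fin n) (Fin H × Fin n) ℝ) (i, a) (j, b) = 0 := by
        simp [Matrix.one_apply, Prod.ext_iff, Fin.ext_iff, hij]
      rw [this, sub_self]



lemma gw_mul_one_sub {n : ℕ} (H : ℕ) (A : Matrix (Fin n) (Fin n) ℝ) :
    Gw H A * (1 - blk (fshift H) A) = 1 :=
  mul_eq_one_comm.mp (one_sub_mul H A)

lemma blk_sub {H H' n m : ℕ} (f : Fin H → Option (Fin H'))
    (C D : Matrix (Fin n) (Fin m) ℝ) : blk f C - blk f D = blk f (C - D) := by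
  ext ⟨i, a⟩ ⟨j, b⟩
  simp only [blk, Matrix.sub_apply, of_apply]
  split <;> simp

lemma gw_diff {n : ℕ} (H : ℕ) (A₁ A₂ : Matrix (Fin n) (Fin n) ℝ) :
    Gw H A₁ - Gw H A₂ = Gw H A₁ * blk (fshift H) (A₁ - A₂) * Gw H A₂ := by
  have e1 : blk (fshift H) A₂ * Gw H A₂ = Gw H A₂ - 1 := by
    have h := one_sub_mul H A₂
    rw [Matrix.sub_mul, Matrix.one_mul] at h
    rw [← h]; abel
  have e2 : Gw H A₁ * blk (fshift H) A₁ = Gw H A₁ - 1 := by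
    have h := gw_mul_one_sub H A₁
    rw [Matrix.mul_sub, Matrix.mul_one] at h
    rw [← h]; abel
  calc Gw H A₁ - Gw H A₂
      = (Gw H A₁ - 1) * Gw H A₂ - Gw H A₁ * (Gw H A₂ - 1) := by noncomm_ring
    _ = (Gw H A₁ * blk (fshift H) A₁) * Gw H A₂
        - Gw H A₁ * (blk (fshift H) A₂ * Gw H A₂) := by rw [e1, e2]
    _ = Gw H A₁ * blk (fshift H) (A₁ - A₂) * Gw H A₂ := by rw [← blk_sub]; noncomm_ring

end GuAux

open GuAux

/-- For `H ≥ 1`, `A₁, A₂ ∈ ℝ^{n×n}` and `B₁, B₂ ∈ ℝ^{n×m}`: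
`‖G_u(A₁,B₁) − G_u(A₂,B₂)‖₂ ≤ ‖B₁‖₂ ‖G_w(A₁)‖₂ ‖G_w(A₂)‖₂ ‖A₁ − A₂‖₂ + ‖G_w(A₂)‖₂ ‖B₁ − B₂‖₂`. -/
theorem Gu_diff_opNorm_bound
    {n m : ℕ} (H : ℕ) (hH : 1 ≤ H)
    (A₁ A₂ : Matrix (Fin n) (Fin n) ℝ) (B₁ B₂ : Matrix (Fin n) (Fin m) ℝ) :
    ‖Gu H A₁ B₁ - Gu H A₂ B₂‖ ≤
      ‖B₁‖ * ‖Gw H A₁‖ * ‖Gw H A₂‖ * ‖A₁ - A₂‖ + ‖Gw H A₂‖ * ‖B₁ - B₂‖ := by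
  have hsome : Function.Injective (fun i : Fin H => some i) :=
    fun a b h => Option.some.inj h
  have hdecomp : Gu H A₁ B₁ - Gu H A₂ B₂
      = Gw H A₁ * blk (fshift H) (A₁ - A₂) * Gw H A₂ * blk (fun i : Fin H => some i) B₁
        + Gw H A₂ * blk (fun i : Fin H => some i) (B₁ - B₂) := by
    calc Gu H A₁ B₁ - Gu H A₂ B₂
        = (Gw H A₁ - Gw H A₂) * blk (fun i : Fin H => some i) B₁
          + Gw H A₂ * (blk (fun i : Fin H => some i) B₁ - blk (fun i : Fin H => some i) B₂) := by
          rw [gu_eq, gu_eq, Matrix.sub_mul, Matrix.mul_sub]; abel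
      _ = _ := by rw [gw_diff, blk_sub]
  rw [hdecomp]
  have nD : ‖blk (fshift H) (A₁ - A₂)‖ ≤ ‖A₁ - A₂‖ := blk_opNorm_le _ (fshift_inj H) _
  have nB1 : ‖blk (fun i : Fin H => some i) B₁‖ ≤ ‖B₁‖ := blk_opNorm_le _ hsome _
  have nB : ‖blk (fun i : Fin H => some i) (B₁ - B₂)‖ ≤ ‖B₁ - B₂‖ := blk_opNorm_le _ hsome _
  have t1 : ‖Gw H A₁ * blk (fshift H) (A₁ - A₂)‖ ≤ ‖Gw H A₁‖ * ‖A₁ - A₂‖ :=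
    le_trans (Matrix.l2_opNorm_mul _ _) (mul_le_mul_of_nonneg_left nD (norm_nonneg _))
  have t2 : ‖Gw H A₁ * blk (fshift H) (A₁ - A₂) * Gw H A₂‖
      ≤ ‖Gw H A₁‖ * ‖A₁ - A₂‖ * ‖Gw H A₂‖ :=
    le_trans (Matrix.l2_opNorm_mul _ _) (mul_le_mul_of_nonneg_right t1 (norm_nonneg _))
  have t3 : ‖Gw H A₁ * blk (fshift H) (A₁ - A₂) * Gw H A₂ * blk (fun i : Fin H => some i) B₁‖
      ≤ ‖Gw H A₁‖ * ‖A₁ - A₂‖ * ‖Gw H A₂‖ * ‖B₁‖ :=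
    le_trans (Matrix.l2_opNorm_mul _ _)
      (mul_le_mul t2 nB1 (norm_nonneg _)
        (by positivity))
  have t4 : ‖Gw H A₂ * blk (fun i : Fin H => some i) (B₁ - B₂)‖ ≤ ‖Gw H A₂‖ * ‖B₁ - B₂‖ :=
    le_trans (Matrix.l2_opNorm_mul _ _) (mul_le_mul_of_nonneg_left nB (norm_nonneg _))
  calc ‖Gw H A₁ * blk (fshift H) (A₁ - A₂) * Gw H A₂ * blk (fun i : Fin H => some i) B₁
        + Gw H A₂ * blk (fun i : Fin H => some i) (B₁ - B₂)‖
      ≤ ‖Gw H A₁ * blk (fshift H) (A₁ - A₂) * Gw H A₂ * blk (fun i : Fin H => some i) B₁‖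
        + ‖Gw H A₂ * blk (fun i : Fin H => some i) (B₁ - B₂)‖ := norm_add_le _ _
    _ ≤ ‖Gw H A₁‖ * ‖A₁ - A₂‖ * ‖Gw H A₂‖ * ‖B₁‖ + ‖Gw H A₂‖ * ‖B₁ - B₂‖ := add_le_add t3 t4
    _ = ‖B₁‖ * ‖Gw H A₁‖ * ‖Gw H A₂‖ * ‖A₁ - A₂‖ + ‖Gw H A₂‖ * ‖B₁ - B₂‖ := by ring
end

section
/- Let A ∈ ℝ^{n×n}, B ∈ ℝ^{n×m} and H ≥ 1. Then ‖G_u(A,B)‖₂ ≤ √(H · λ_max(W^u_H(A,B))), where λ_max denotes the largest eigenvalue of the positive semidefinite matrix W^u_H(A,B). -/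
open Matrix
open scoped Matrix.Norms.L2Operator

/-- The `H`-th controllability Grammian `W^u_H(A,B) = ∑_{i=0}^{H−1} A^i B Bᵀ (Aᵀ)^i`. -/
def Wu {n m : ℕ} (H : ℕ) (A : Matrix (Fin n) (Fin n) ℝ) (B : Matrix (Fin n) (Fin m) ℝ) :
    Matrix (Fin n) (Fin n) ℝ :=
  ∑ i ∈ Finset.range H, A ^ i * B * Bᵀ * (Aᵀ) ^ i

section Aux

private lemma dot_self_nonneg' {k : ℕ} (v : Fin k → ℝ) : 0 ≤ v ⬝ᵥ v :=
  Finset.sum_nonneg fun _ _ => mul_self_nonneg _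

private lemma dotProduct_sum' {k : ℕ} {ι : Type*} (s : Finset ι) (v : Fin k → ℝ)
    (f : ι → Fin k → ℝ) : v ⬝ᵥ (∑ j ∈ s, f j) = ∑ j ∈ s, v ⬝ᵥ f j := by
  simp only [dotProduct, Finset.sum_apply, Finset.mul_sum]
  exact Finset.sum_comm

private lemma sum_mulVec' {k l : ℕ} {ι : Type*} (s : Finset ι)
    (f : ι → Matrix (Fin k) (Fin l) ℝ) (y : Fin l → ℝ) :
    (∑ j ∈ s, f j) *ᵥ y = ∑ j ∈ s, f j *ᵥ y := by
  funext a
  simp only [Matrix.mulVec, dotProduct, Finset.sum_apply, Matrix.sum_apply,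
    Finset.sum_mul]
  exact Finset.sum_comm

/-- Rayleigh-type upper bound via the spectral theorem. -/
private lemma quad_le_iSup {n : ℕ} {M : Matrix (Fin n) (Fin n) ℝ} (hM : M.IsHermitian)
    (v : Fin n → ℝ) :
    v ⬝ᵥ (M *ᵥ v) ≤ (⨆ i : Fin n, hM.eigenvalues i) * (v ⬝ᵥ v) := by
  classical
  set U : Matrix (Fin n) (Fin n) ℝ :=
    (Matrix.IsHermitian.eigenvectorUnitary hM : Matrix (Fin n) (Fin n) ℝ) with hU
  have hstar : star U = Uᵀ := by
    rw [Matrix.star_eq_conjTranspose, Matrix.conjTranspose_eq_transpose_of_trivial]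
  have hUU : U * Uᵀ = 1 := by
    rw [← hstar]
    exact (Matrix.mem_unitaryGroup_iff).mp (Matrix.IsHermitian.eigenvectorUnitary hM).2
  have hdiag : ((RCLike.ofReal ∘ hM.eigenvalues : Fin n → ℝ)) = hM.eigenvalues := by
    funext i; simp
  set w : Fin n → ℝ := Uᵀ *ᵥ v with hw
  have hMw : M = U * Matrix.diagonal hM.eigenvalues * Uᵀ := by
    conv_lhs => rw [hM.spectral_theorem]
    rw [Unitary.conjStarAlgAut_apply, hdiag, hstar]
  have h1 : v ⬝ᵥ (M *ᵥ v) = ∑ i, hM.eigenvalues i * (w i * w i) := by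
    conv_lhs => rw [hMw]
    rw [← Matrix.mulVec_mulVec, ← Matrix.mulVec_mulVec, Matrix.dotProduct_mulVec,
      ← Matrix.mulVec_transpose, ← hw]
    simp only [dotProduct, Matrix.mulVec_diagonal]
    exact Finset.sum_congr rfl fun i _ => by ring
  have h2 : v ⬝ᵥ v = ∑ i, w i * w i := by
    have h2' : (Uᵀ *ᵥ v) ⬝ᵥ (Uᵀ *ᵥ v) = v ⬝ᵥ v := by
      rw [Matrix.dotProduct_mulVec, Matrix.vecMul_transpose, Matrix.mulVec_mulVec, hUU,
        Matrix.one_mulVec]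
    rw [← h2', ← hw]
    rfl
  rw [h1, h2, Finset.mul_sum]
  refine Finset.sum_le_sum fun i _ => ?_
  exact mul_le_mul_of_nonneg_right
    (le_ciSup (Set.Finite.bddAbove (Set.finite_range _)) i) (mul_self_nonneg _)

private lemma wu_posSemidef {n m : ℕ} (H : ℕ) (A : Matrix (Fin n) (Fin n) ℝ)
    (B : Matrix (Fin n) (Fin m) ℝ) : (Wu H A B).PosSemidef := by
  unfold Wu
  refine Finset.sum_induction _ (p := fun M => Matrix.PosSemidef M) (fun a b ha hb => ha.add hb) Matrix.PosSemidef.zero ?_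
  intro i _
  have h : A ^ i * B * Bᵀ * (Aᵀ) ^ i = (A ^ i * B) * (A ^ i * B)ᴴ := by
    rw [Matrix.conjTranspose_eq_transpose_of_trivial, Matrix.transpose_mul,
      Matrix.transpose_pow]
    exact Matrix.mul_assoc _ _ _
  rw [h]
  exact Matrix.posSemidef_self_mul_conjTranspose _

private lemma iSup_eig_nonneg {n m : ℕ} (H : ℕ) (A : Matrix (Fin n) (Fin n) ℝ)
    (B : Matrix (Fin n) (Fin m) ℝ) (hW : (Wu H A B).IsHermitian) :
    0 ≤ ⨆ i : Fin n, hW.eigenvalues i :=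
  Real.iSup_nonneg fun i => (wu_posSemidef H A B).eigenvalues_nonneg i

/-- The key per-block bound: `‖∑_{j ≤ i} A^{i-j} B u_j‖² ≤ λ_max · ∑_j ‖u_j‖²`. -/
private lemma block_bound {n m : ℕ} (H : ℕ) (A : Matrix (Fin n) (Fin n) ℝ)
    (B : Matrix (Fin n) (Fin m) ℝ) (hW : (Wu H A B).IsHermitian)
    (u : Fin H → Fin m → ℝ) (i : Fin H) :
    (∑ j ∈ Finset.univ.filter (fun j : Fin H => (j : ℕ) ≤ (i : ℕ)),
        (A ^ ((i : ℕ) - (j : ℕ)) * B) *ᵥ u j) ⬝ᵥ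
      (∑ j ∈ Finset.univ.filter (fun j : Fin H => (j : ℕ) ≤ (i : ℕ)),
        (A ^ ((i : ℕ) - (j : ℕ)) * B) *ᵥ u j)
      ≤ (⨆ k : Fin n, hW.eigenvalues k) * ∑ j, u j ⬝ᵥ u j := by
  classical
  set lam := ⨆ k : Fin n, hW.eigenvalues k with hlam
  have hlam0 : 0 ≤ lam := iSup_eig_nonneg H A B hW
  set s : Finset (Fin H) := Finset.univ.filter (fun j : Fin H => (j : ℕ) ≤ (i : ℕ)) with hs
  set y : Fin n → ℝ := ∑ j ∈ s, (A ^ ((i : ℕ) - (j : ℕ)) * B) *ᵥ u j with hy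
  set wv : Fin H → Fin m → ℝ := fun j => (A ^ ((i : ℕ) - (j : ℕ)) * B)ᵀ *ᵥ y with hwv
  set S : ℝ := ∑ j, u j ⬝ᵥ u j with hS
  have hS0 : 0 ≤ S := Finset.sum_nonneg fun j _ => dot_self_nonneg' _
  -- Step 1: y ⬝ᵥ y = ∑_{j ∈ s} wv j ⬝ᵥ u j
  have step1 : y ⬝ᵥ y = ∑ j ∈ s, wv j ⬝ᵥ u j := by
    conv_lhs => rw [hy]
    rw [dotProduct_sum']
    refine Finset.sum_congr rfl fun j _ => ?_
    rw [Matrix.dotProduct_mulVec, ← Matrix.mulVec_transpose]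
  -- Step 2 (Cauchy–Schwarz): (∑_{j∈s} wv j ⬝ᵥ u j)² ≤ (∑_{j∈s} wv j ⬝ᵥ wv j) * (∑_{j∈s} u j ⬝ᵥ u j)
  have step2 : (∑ j ∈ s, wv j ⬝ᵥ u j) ^ 2
      ≤ (∑ j ∈ s, wv j ⬝ᵥ wv j) * (∑ j ∈ s, u j ⬝ᵥ u j) := by
    have := Finset.sum_mul_sq_le_sq_mul_sq (s ×ˢ Finset.univ)
      (fun p : Fin H × Fin m => wv p.1 p.2) (fun p : Fin H × Fin m => u p.1 p.2)
    simpa only [Finset.sum_product, dotProduct, pow_two] using this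
  -- Step 3: ∑_{j∈s} wv j ⬝ᵥ wv j ≤ y ⬝ᵥ (Wu H A B *ᵥ y)
  have step3 : (∑ j ∈ s, wv j ⬝ᵥ wv j) ≤ y ⬝ᵥ (Wu H A B *ᵥ y) := by
    have hterm : ∀ k : ℕ, y ⬝ᵥ ((A ^ k * B * Bᵀ * (Aᵀ) ^ k) *ᵥ y)
        = ((A ^ k * B)ᵀ *ᵥ y) ⬝ᵥ ((A ^ k * B)ᵀ *ᵥ y) := by
      intro k
      have hfac : A ^ k * B * Bᵀ * (Aᵀ) ^ k = (A ^ k * B) * (A ^ k * B)ᵀ := by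
        rw [Matrix.transpose_mul, Matrix.transpose_pow]; exact Matrix.mul_assoc _ _ _
      rw [hfac, ← Matrix.mulVec_mulVec, Matrix.dotProduct_mulVec, ← Matrix.mulVec_transpose]
    have himg : ∑ j ∈ s, wv j ⬝ᵥ wv j
        = ∑ k ∈ s.image (fun j : Fin H => (i : ℕ) - (j : ℕ)),
            y ⬝ᵥ ((A ^ k * B * Bᵀ * (Aᵀ) ^ k) *ᵥ y) := by
      rw [Finset.sum_image ?_]
      · refine Finset.sum_congr rfl fun j _ => ?_
        rw [hterm]
      · intro a ha b hb hab
        simp only [hs, Finset.mem_coe, Finset.coe_filter, Set.mem_setOf_eq, Finset.mem_filter, Finset.mem_univ, true_and] at ha hb hab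
        omega
    rw [himg]
    have hWsum : Wu H A B *ᵥ y = ∑ k ∈ Finset.range H, (A ^ k * B * Bᵀ * (Aᵀ) ^ k) *ᵥ y := by
      rw [Wu, sum_mulVec']
    rw [hWsum, dotProduct_sum']
    refine Finset.sum_le_sum_of_subset_of_nonneg ?_ ?_
    · intro k hk
      simp only [Finset.mem_image, hs, Finset.mem_filter] at hk
      obtain ⟨j, ⟨-, hj⟩, rfl⟩ := hk
      simp only [Finset.mem_range]
      omega
    · intro k _ _
      rw [hterm]
      exact dot_self_nonneg' _
  -- Step 4: Rayleigh bound
  have step4 : y ⬝ᵥ (Wu H A B *ᵥ y) ≤ lam * (y ⬝ᵥ y) := quad_le_iSup hW y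
  -- Combine
  have hsub : (∑ j ∈ s, u j ⬝ᵥ u j) ≤ S := by
    refine Finset.sum_le_sum_of_subset_of_nonneg (Finset.subset_univ _) ?_
    intro j _ _; exact dot_self_nonneg' _
  have hkey : (y ⬝ᵥ y) ^ 2 ≤ (lam * S) * (y ⬝ᵥ y) := by
    calc (y ⬝ᵥ y) ^ 2 = (∑ j ∈ s, wv j ⬝ᵥ u j) ^ 2 := by rw [step1]
      _ ≤ (∑ j ∈ s, wv j ⬝ᵥ wv j) * (∑ j ∈ s, u j ⬝ᵥ u j) := step2
      _ ≤ (y ⬝ᵥ (Wu H A B *ᵥ y)) * S := by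
          exact mul_le_mul step3 hsub (Finset.sum_nonneg fun j _ => dot_self_nonneg' _)
            ((Finset.sum_nonneg fun j _ => dot_self_nonneg' _).trans step3)
      _ ≤ (lam * (y ⬝ᵥ y)) * S := by
          exact mul_le_mul_of_nonneg_right step4 hS0
      _ = (lam * S) * (y ⬝ᵥ y) := by ring
  rcases eq_or_lt_of_le (dot_self_nonneg' y) with h0 | hpos
  · rw [← h0]
    exact mul_nonneg hlam0 hS0
  · rw [pow_two] at hkey
    exact le_of_mul_le_mul_right hkey hpos

end Aux

/-- For `A ∈ ℝ^{n×n}`, `B ∈ ℝ^{n×m}` and `H ≥ 1`: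
`‖G_u(A,B)‖₂ ≤ √(H · λ_max(W^u_H(A,B)))`, where `λ_max` is the largest eigenvalue of the
(symmetric positive semidefinite) Grammian. -/
theorem Gu_opNorm_le_sqrt_grammian
    {n m : ℕ} (H : ℕ) (hH : 1 ≤ H)
    (A : Matrix (Fin n) (Fin n) ℝ) (B : Matrix (Fin n) (Fin m) ℝ)
    (hW : (Wu H A B).IsHermitian) :
    ‖Gu H A B‖ ≤ Real.sqrt ((H : ℝ) * ⨆ i : Fin n, hW.eigenvalues i) := by
  classical
  set lam := ⨆ i : Fin n, hW.eigenvalues i with hlam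
  have hlam0 : 0 ≤ lam := iSup_eig_nonneg H A B hW
  rw [Matrix.l2_opNorm_def]
  refine ContinuousLinearMap.opNorm_le_bound _ (Real.sqrt_nonneg _) fun x => ?_
  simp only [LinearEquiv.trans_apply, LinearMap.coe_toContinuousLinearMap']
  set v : Fin H × Fin m → ℝ := (WithLp.equiv 2 (Fin H × Fin m → ℝ)) x with hv
  set u : Fin H → Fin m → ℝ := fun j b => v (j, b) with hu
  set y : Fin H → Fin n → ℝ := fun i =>
    ∑ j ∈ Finset.univ.filter (fun j : Fin H => (j : ℕ) ≤ (i : ℕ)),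
      (A ^ ((i : ℕ) - (j : ℕ)) * B) *ᵥ u j with hyy
  have hmv : ∀ p : Fin H × Fin n, (Gu H A B *ᵥ v) p = y p.1 p.2 := by
    rintro ⟨i, a⟩
    show (Gu H A B *ᵥ v) (i, a) = y i a
    rw [hyy]
    simp only [Matrix.mulVec, dotProduct, Gu, Matrix.of_apply, Fintype.sum_prod_type]
    rw [Finset.sum_apply, Finset.sum_filter]
    refine Finset.sum_congr rfl fun j _ => ?_
    by_cases h : (j : ℕ) ≤ (i : ℕ)
    · simp only [h, if_true, Matrix.mulVec, dotProduct, hu]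
    · simp [h]
  have hx2 : ‖x‖ ^ 2 = ∑ j, u j ⬝ᵥ u j := by
    rw [EuclideanSpace.norm_eq, Real.sq_sqrt (Finset.sum_nonneg fun _ _ => sq_nonneg _)]
    rw [Fintype.sum_prod_type]
    refine Finset.sum_congr rfl fun j _ => Finset.sum_congr rfl fun b _ => ?_
    simp only [Real.norm_eq_abs, sq_abs]
    rw [pow_two]
    rfl
  have hTx : ‖(Matrix.toEuclideanLin (Gu H A B)) x‖ ^ 2 = ∑ i, y i ⬝ᵥ y i := by
    rw [EuclideanSpace.norm_eq, Real.sq_sqrt (Finset.sum_nonneg fun _ _ => sq_nonneg _)]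
    rw [Fintype.sum_prod_type]
    refine Finset.sum_congr rfl fun i _ => ?_
    simp only [dotProduct, ← pow_two]
    refine Finset.sum_congr rfl fun a _ => ?_
    have : (Matrix.toEuclideanLin (Gu H A B)) x (i, a) = (Gu H A B *ᵥ v) (i, a) := rfl
    rw [Real.norm_eq_abs, sq_abs, this, hmv ⟨i, a⟩]
  have key : ‖(Matrix.toEuclideanLin (Gu H A B)) x‖ ^ 2 ≤ ((H : ℝ) * lam) * ‖x‖ ^ 2 := by
    rw [hTx, hx2]
    calc (∑ i, y i ⬝ᵥ y i) ≤ ∑ _i : Fin H, lam * ∑ j, u j ⬝ᵥ u j := by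
          refine Finset.sum_le_sum fun i _ => ?_
          exact block_bound H A B hW u i
      _ = ((H : ℝ) * lam) * ∑ j, u j ⬝ᵥ u j := by
          rw [Finset.sum_const, Finset.card_univ, Fintype.card_fin, nsmul_eq_mul]
          ring
  have h1 := Real.sqrt_le_sqrt key
  rw [Real.sqrt_sq (norm_nonneg _), Real.sqrt_mul (mul_nonneg (Nat.cast_nonneg _) hlam0),
    Real.sqrt_sq (norm_nonneg _)] at h1
  exact h1
end

section
/- Let A ∈ ℝ^{n×n} and H ≥ 1. Then ‖G_w(A)‖₂ ≤ √(H · λ_max(W^w_H(A))), where λ_max denotes the largest eigenvalue of the positive semidefinite matrix W^w_H(A). -/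
open Matrix
open scoped Matrix.Norms.L2Operator

/-- The `H`-th disturbance controllability Grammian `W^w_H(A) = ∑_{i=0}^{H−1} A^i (Aᵀ)^i`. -/
def Ww {n : ℕ} (H : ℕ) (A : Matrix (Fin n) (Fin n) ℝ) : Matrix (Fin n) (Fin n) ℝ :=
  ∑ i ∈ Finset.range H, A ^ i * (Aᵀ) ^ i

/-- Rayleigh quotient bound for a real symmetric matrix. -/
lemma rayleigh_le {n : ℕ} {W : Matrix (Fin n) (Fin n) ℝ} (hW : W.IsHermitian) (v : Fin n → ℝ) :
    v ⬝ᵥ (W *ᵥ v) ≤ (⨆ i, hW.eigenvalues i) * (v ⬝ᵥ v) := by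
  classical
  set U : Matrix (Fin n) (Fin n) ℝ := (hW.eigenvectorUnitary : Matrix (Fin n) (Fin n) ℝ) with hU
  have hUU : U * star U = 1 := (Matrix.mem_unitaryGroup_iff).mp hW.eigenvectorUnitary.2
  set w : Fin n → ℝ := star U *ᵥ v with hw
  have hstar : star U = Uᵀ := by
    ext i j; simp [Matrix.conjTranspose_apply]
  have hvU : v ᵥ* U = w := by
    rw [hw, hstar, Matrix.mulVec_transpose]
  have key : v ⬝ᵥ (W *ᵥ v) = ∑ k, hW.eigenvalues k * (w k)^2 := by
    conv_lhs => rw [hW.spectral_theorem, Unitary.conjStarAlgAut_apply]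
    rw [← Matrix.mulVec_mulVec, ← Matrix.mulVec_mulVec, Matrix.dotProduct_mulVec, hvU]
    simp only [dotProduct, Matrix.mulVec_diagonal]
    refine Finset.sum_congr rfl fun k _ => by
      simp [← hw, Function.comp]; ring
  have hww : w ⬝ᵥ w = v ⬝ᵥ v := by
    rw [hw, hstar, Matrix.dotProduct_mulVec, Matrix.mulVec_transpose, Matrix.vecMul_vecMul,
      ← hstar, hUU, Matrix.vecMul_one]
  have hbdd : BddAbove (Set.range hW.eigenvalues) := Set.Finite.bddAbove (Set.finite_range _)
  calc v ⬝ᵥ (W *ᵥ v) = ∑ k, hW.eigenvalues k * (w k)^2 := key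
    _ ≤ ∑ k, (⨆ i, hW.eigenvalues i) * (w k)^2 := by
        refine Finset.sum_le_sum fun k _ => ?_
        exact mul_le_mul_of_nonneg_right (le_ciSup hbdd k) (sq_nonneg _)
    _ = (⨆ i, hW.eigenvalues i) * (w ⬝ᵥ w) := by
        rw [← Finset.mul_sum]; congr 1; simp [dotProduct, sq]
    _ = _ := by rw [hww]

/-- The Grammian is positive semidefinite. -/
lemma Ww_posSemidef {n : ℕ} (H : ℕ) (A : Matrix (Fin n) (Fin n) ℝ) : (Ww H A).PosSemidef := by
  classical
  unfold Ww
  refine Finset.sum_induction _ (p := Matrix.PosSemidef) (fun a b ha hb => ha.add hb) Matrix.PosSemidef.zero ?_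
  intro i _
  have : (Aᵀ) ^ i = (A ^ i)ᴴ := by
    rw [← Matrix.transpose_pow]
    ext a b; simp [Matrix.conjTranspose_apply]
  rw [this]
  exact Matrix.posSemidef_self_mul_conjTranspose _

lemma sup_eig_nonneg {n H : ℕ} {A : Matrix (Fin n) (Fin n) ℝ} (hW : (Ww H A).IsHermitian) :
    0 ≤ ⨆ i : Fin n, hW.eigenvalues i := by
  rcases isEmpty_or_nonempty (Fin n) with h | h
  · simp [Real.iSup_of_isEmpty]
  · obtain ⟨k⟩ := h
    exact le_trans ((Ww_posSemidef H A).eigenvalues_nonneg k)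
      (le_ciSup (Set.Finite.bddAbove (Set.finite_range _)) k)

/-- Row-block bound via Cauchy–Schwarz and the Rayleigh bound. -/
lemma block_bound_s8 {n : ℕ} (H : ℕ) (A : Matrix (Fin n) (Fin n) ℝ)
    (hW : (Ww H A).IsHermitian) (hlam : 0 ≤ ⨆ j, hW.eigenvalues j)
    (x : Fin H × Fin n → ℝ) (i : Fin H) :
    ∑ a : Fin n, (∑ q : Fin H × Fin n, Gw H A (i, a) q * x q) ^ 2
      ≤ (⨆ j, hW.eigenvalues j) * ∑ q, (x q) ^ 2 := by
  classical
  set lam := ⨆ j, hW.eigenvalues j with hlamdef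
  set u : Fin n → ℝ := fun a => ∑ q, Gw H A (i, a) q * x q with hu
  set w : Fin H × Fin n → ℝ := fun q => ∑ a, Gw H A (i, a) q * u a with hwdef
  set S : ℝ := ∑ a, (u a) ^ 2 with hSdef
  have hS0 : 0 ≤ S := Finset.sum_nonneg fun _ _ => sq_nonneg _
  have hx0 : (0:ℝ) ≤ ∑ q, (x q) ^ 2 := Finset.sum_nonneg fun _ _ => sq_nonneg _
  -- S = ∑ q, x q * w q
  have hS : S = ∑ q, x q * w q := by
    rw [hSdef]
    calc ∑ a, (u a)^2 = ∑ a, ∑ q, x q * (Gw H A (i,a) q * u a) := by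
          refine Finset.sum_congr rfl fun a _ => ?_
          rw [sq]
          nth_rewrite 2 [hu]
          rw [Finset.mul_sum]
          exact Finset.sum_congr rfl fun q _ => by ring
      _ = ∑ q, x q * w q := by
          rw [Finset.sum_comm]
          refine Finset.sum_congr rfl fun q _ => ?_
          rw [hwdef, Finset.mul_sum]
  -- the reflected-sum bound for ∑ w²
  set g : ℕ → ℝ := fun k => ∑ b, (((Aᵀ) ^ k *ᵥ u) b) ^ 2 with hg
  have hg0 : ∀ k, 0 ≤ g k := fun k => Finset.sum_nonneg fun _ _ => sq_nonneg _
  have hwq : ∀ (j : Fin H) (b : Fin n),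
      w (j, b) = if (j : ℕ) ≤ (i : ℕ) then ((Aᵀ) ^ ((i:ℕ) - (j:ℕ)) *ᵥ u) b else 0 := by
    intro j b
    rw [hwdef]
    by_cases h : (j : ℕ) ≤ (i : ℕ)
    · rw [if_pos h]
      rw [Matrix.mulVec, ← Matrix.transpose_pow]
      simp only [Gw, Matrix.of_apply, if_pos h, dotProduct, Matrix.transpose_apply]
    · rw [if_neg h]
      refine Finset.sum_eq_zero fun a _ => ?_
      simp only [Gw, Matrix.of_apply, if_neg h, zero_mul]
  have hw2 : ∑ q, (w q) ^ 2 ≤ lam * S := by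
    have e1 : ∑ q, (w q) ^ 2
        = ∑ j ∈ Finset.range H, (if j ≤ (i : ℕ) then g ((i:ℕ) - j) else 0) := by
      rw [Fintype.sum_prod_type]
      rw [← Fin.sum_univ_eq_sum_range (fun j => if j ≤ (i:ℕ) then g ((i:ℕ) - j) else 0) H]
      refine Finset.sum_congr rfl fun j _ => ?_
      by_cases h : (j : ℕ) ≤ (i : ℕ)
      · rw [if_pos h]; rw [hg]
        refine Finset.sum_congr rfl fun b _ => by rw [hwq j b, if_pos h]
      · rw [if_neg h]
        refine Finset.sum_eq_zero fun b _ => by rw [hwq j b, if_neg h]; simp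
    have e2 : ∑ j ∈ Finset.range H, (if j ≤ (i : ℕ) then g ((i:ℕ) - j) else 0)
        = ∑ j ∈ Finset.range ((i:ℕ)+1), g ((i:ℕ) - j) := by
      rw [← Finset.sum_subset (Finset.range_subset_range.mpr i.isLt)]
      · refine Finset.sum_congr rfl fun j hj => ?_
        rw [if_pos (Nat.lt_succ_iff.mp (Finset.mem_range.mp hj))]
      · intro j _ hj
        rw [if_neg (fun h => hj (Finset.mem_range.mpr (Nat.lt_succ_of_le h)))]
    have e3 : ∑ j ∈ Finset.range ((i:ℕ)+1), g ((i:ℕ) - j)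
        = ∑ k ∈ Finset.range ((i:ℕ)+1), g k := by
      have := Finset.sum_range_reflect g ((i:ℕ)+1)
      simpa using this
    have e4 : ∑ k ∈ Finset.range ((i:ℕ)+1), g k ≤ ∑ k ∈ Finset.range H, g k :=
      Finset.sum_le_sum_of_subset_of_nonneg (Finset.range_subset_range.mpr i.isLt)
        (fun k _ _ => hg0 k)
    have e5 : ∑ k ∈ Finset.range H, g k = u ⬝ᵥ (Ww H A *ᵥ u) := by
      have hsum : ∀ (s : Finset ℕ) (M : ℕ → Matrix (Fin n) (Fin n) ℝ),
          u ⬝ᵥ ((∑ k ∈ s, M k) *ᵥ u) = ∑ k ∈ s, u ⬝ᵥ (M k *ᵥ u) := by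
        intro s M
        induction s using Finset.induction with
        | empty => simp
        | insert a s h ih =>
            rw [Finset.sum_insert h, Matrix.add_mulVec, dotProduct_add, ih,
              Finset.sum_insert h]
      rw [Ww, hsum]
      refine Finset.sum_congr rfl fun k _ => ?_
      rw [← Matrix.mulVec_mulVec, Matrix.dotProduct_mulVec, ← Matrix.transpose_pow,
        ← Matrix.mulVec_transpose, Matrix.transpose_pow]
      rw [hg]
      simp [dotProduct, sq]
    have e6 : u ⬝ᵥ (Ww H A *ᵥ u) ≤ lam * S := by
      have := rayleigh_le hW u
      have hdp : u ⬝ᵥ u = S := by rw [hSdef]; simp [dotProduct, sq]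
      rw [hdp] at this
      exact this
    calc ∑ q, (w q)^2 = _ := e1
      _ = _ := e2
      _ = _ := e3
      _ ≤ _ := e4
      _ = _ := e5
      _ ≤ _ := e6
  -- Cauchy–Schwarz and conclusion
  have hcs : S ^ 2 ≤ (∑ q, (x q) ^ 2) * (∑ q, (w q) ^ 2) := by
    rw [hS]
    exact Finset.sum_mul_sq_le_sq_mul_sq _ _ _
  have key : S * S ≤ (lam * ∑ q, (x q)^2) * S := by
    calc S * S = S ^ 2 := (sq S).symm
      _ ≤ (∑ q, (x q)^2) * (∑ q, (w q)^2) := hcs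
      _ ≤ (∑ q, (x q)^2) * (lam * S) := by
          exact mul_le_mul_of_nonneg_left hw2 hx0
      _ = (lam * ∑ q, (x q)^2) * S := by ring
  rcases eq_or_lt_of_le hS0 with h | h
  · rw [← h]; positivity
  · exact le_of_mul_le_mul_right key h

set_option maxHeartbeats 2000000 in
/-- For `A ∈ ℝ^{n×n}` and `H ≥ 1`: `‖G_w(A)‖₂ ≤ √(H · λ_max(W^w_H(A)))`, where `λ_max` is the
largest eigenvalue of the (symmetric positive semidefinite) Grammian. -/
theorem Gw_opNorm_le_sqrt_grammian
    {n : ℕ} (H : ℕ) (hH : 1 ≤ H) (A : Matrix (Fin n) (Fin n) ℝ)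
    (hW : (Ww H A).IsHermitian) :
    ‖Gw H A‖ ≤ Real.sqrt ((H : ℝ) * ⨆ i : Fin n, hW.eigenvalues i) := by
  classical
  set lam := ⨆ i : Fin n, hW.eigenvalues i with hlamdef
  have hlam : 0 ≤ lam := sup_eig_nonneg hW
  have hHlam : 0 ≤ (H : ℝ) * lam := mul_nonneg (Nat.cast_nonneg H) hlam
  rw [Matrix.l2_opNorm_def]
  refine ContinuousLinearMap.opNorm_le_bound _ (Real.sqrt_nonneg _) fun x => ?_
  set y : Fin H × Fin n → ℝ := (Gw H A) *ᵥ (WithLp.equiv 2 _ x) with hy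
  have hnormy : ‖((Matrix.toEuclideanLin ≪≫ₗ LinearMap.toContinuousLinearMap) (Gw H A)) x‖
      = Real.sqrt (∑ p, (y p) ^ 2) := by
    rw [EuclideanSpace.norm_eq]
    congr 1
    refine Finset.sum_congr rfl fun p _ => ?_
    rw [Real.norm_eq_abs, sq_abs]
    rfl
  have hnormx : ‖x‖ = Real.sqrt (∑ q, ((WithLp.equiv 2 _ x) q) ^ 2) := by
    rw [EuclideanSpace.norm_eq]
    refine congrArg _ (Finset.sum_congr rfl fun q _ => ?_)
    rw [Real.norm_eq_abs, sq_abs]; rfl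
  rw [hnormy, hnormx, ← Real.sqrt_mul hHlam]
  apply Real.sqrt_le_sqrt
  set xv : Fin H × Fin n → ℝ := WithLp.equiv 2 _ x with hxv
  have hyp : ∀ p : Fin H × Fin n, y p = ∑ q, Gw H A p q * xv q := fun p => rfl
  calc ∑ p, (y p)^2 = ∑ i : Fin H, ∑ a : Fin n, (∑ q, Gw H A (i, a) q * xv q)^2 := by
        rw [Fintype.sum_prod_type]
        exact Finset.sum_congr rfl fun i _ => Finset.sum_congr rfl fun a _ => by rw [hyp]
    _ ≤ ∑ _i : Fin H, lam * ∑ q, (xv q)^2 :=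
        Finset.sum_le_sum fun i _ => block_bound_s8 H A hW hlam xv i
    _ = (H : ℝ) * lam * ∑ q, (xv q)^2 := by
        rw [Finset.sum_const, Finset.card_univ, Fintype.card_fin, nsmul_eq_mul]; ring
end

section
/- Let A ∈ ℝ^{n×n}, B ∈ ℝ^{n×m} and H ≥ 1, and suppose the matrix P_H(A,B) = [A^{H−1}B, A^{H−2}B, …, B] ∈ ℝ^{n×Hm} has full row rank n. Then the finite-impulse-response system-level-synthesis constraint is feasible: there exist matrices Φˣ₀, Φˣ₁, …, Φˣ_H ∈ ℝ^{n×n} and Φᵘ₀, …, Φᵘ_{H−1} ∈ ℝ^{m×n} such that Φˣ₀ = I, Φˣ_{k+1} = A·Φˣ_k + B·Φᵘ_k for all 0 ≤ k ≤ H−1, and Φˣ_H = 0. -/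
open Matrix

/-- The `H`-step controllability matrix `P_H(A,B) = [A^{H−1}B, …, B] ∈ ℝ^{n×Hm}`. -/
def PH {n m : ℕ} (H : ℕ) (A : Matrix (Fin n) (Fin n) ℝ) (B : Matrix (Fin n) (Fin m) ℝ) :
    Matrix (Fin n) (Fin H × Fin m) ℝ :=
  Matrix.of fun i q => (A ^ (H - 1 - (q.1 : ℕ)) * B) i q.2

lemma mulVec_surj_of_rank {n : ℕ} {q : Type*} [Fintype q] (M : Matrix (Fin n) q ℝ)
    (h : M.rank = n) : Function.Surjective M.mulVec := by
  have : LinearMap.range M.mulVecLin = ⊤ := by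
    apply Submodule.eq_top_of_finrank_eq
    rw [← Matrix.rank, h]
    simp [Module.finrank_pi]
  intro y
  obtain ⟨x, hx⟩ := (LinearMap.range_eq_top.mp this) y
  exact ⟨x, hx⟩

/-- If the `H`-step controllability matrix `P_H(A,B)` has full row rank `n`, then the
finite-impulse-response System Level Synthesis constraint is feasible: there exist
`Φˣ₀, …, Φˣ_H` and `Φᵘ₀, …, Φᵘ_{H−1}` with `Φˣ₀ = I`, `Φˣ_{k+1} = A Φˣ_k + B Φᵘ_k` for
`0 ≤ k ≤ H−1`, and `Φˣ_H = 0`. -/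
theorem sls_fir_feasible_of_fullRowRank
    {n m : ℕ} (H : ℕ) (hH : 1 ≤ H)
    (A : Matrix (Fin n) (Fin n) ℝ) (B : Matrix (Fin n) (Fin m) ℝ)
    (hrank : (PH H A B).rank = n) :
    ∃ (Φx : ℕ → Matrix (Fin n) (Fin n) ℝ) (Φu : ℕ → Matrix (Fin m) (Fin n) ℝ),
      Φx 0 = 1 ∧ (∀ k < H, Φx (k + 1) = A * Φx k + B * Φu k) ∧ Φx H = 0 := by
  have hsurj := mulVec_surj_of_rank (PH H A B) hrank
  -- for each column j of -(A^H), pick a preimage vector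
  choose v hv using fun j : Fin n => hsurj (fun i => -((A ^ H) i j))
  -- Φu k has rows indexed by Fin m; only k < H matters
  set Φu : ℕ → Matrix (Fin m) (Fin n) ℝ := fun k =>
    if hk : k < H then Matrix.of (fun r j => v j (⟨k, hk⟩, r)) else 0 with hΦu
  set Φx : ℕ → Matrix (Fin n) (Fin n) ℝ := fun k =>
    Nat.rec 1 (fun k Φ => A * Φ + B * Φu k) k with hΦx
  refine ⟨Φx, Φu, rfl, fun k _ => rfl, ?_⟩
  -- closed form for Φx
  have hclosed : ∀ k, Φx k = A ^ k + ∑ t ∈ Finset.range k, A ^ (k - 1 - t) * B * Φu t := by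
    intro k
    induction k with
    | zero => simp [hΦx]
    | succ k ih =>
      have : Φx (k + 1) = A * Φx k + B * Φu k := rfl
      rw [this, ih, Finset.sum_range_succ]
      rw [Matrix.mul_add, Finset.mul_sum]
      have h1 : A * A ^ k = A ^ (k + 1) := (pow_succ' A k).symm
      have h2 : ∀ t ∈ Finset.range k, A * (A ^ (k - 1 - t) * B * Φu t)
          = A ^ (k + 1 - 1 - t) * B * Φu t := by
        intro t ht
        have htk : t < k := Finset.mem_range.mp ht
        have : k + 1 - 1 - t = (k - 1 - t) + 1 := by omega
        simp only [this, pow_succ', Matrix.mul_assoc]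
      rw [Finset.sum_congr rfl h2, h1]
      simp [add_assoc]
  -- compute Φx H entrywise
  have key : ∀ (i j : Fin n),
      (∑ t ∈ Finset.range H, A ^ (H - 1 - t) * B * Φu t) i j = -((A ^ H) i j) := by
    intro i j
    have := congrFun (hv j) i
    rw [Matrix.mulVec, dotProduct] at this
    rw [← this]
    rw [Matrix.sum_apply, ← Fin.sum_univ_eq_sum_range
      (fun t => (A ^ (H - 1 - t) * B * Φu t) i j) H]
    rw [← Finset.univ_product_univ, Finset.sum_product]
    refine Finset.sum_congr rfl fun t _ => ?_
    have hΦut : Φu (t : ℕ) = Matrix.of (fun r j' => v j' (t, r)) := by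
      simp only [hΦu, dif_pos t.isLt]
    rw [hΦut, Matrix.mul_apply]
    refine Finset.sum_congr rfl fun r _ => ?_
    simp [PH, Matrix.mul_apply, mul_comm]
  ext i j
  rw [hclosed H, Matrix.add_apply, key i j]
  simp
end

section
/- Let d ≥ 1 and let K₀ ⊇ K₁ ⊇ … ⊇ K_T be a nested sequence of nonempty compact convex subsets of ℝ^d. For a nonempty compact convex set K ⊆ ℝ^d, its Steiner point is St(K) := d·E_{v}[v · sup_{q ∈ K} ⟨v, q⟩], where the expectation is over v drawn uniformly from the unit sphere S^{d−1}. Then the total movement of the Steiner point selections satisfies Σ_{t=0}^{T−1} ‖St(K_{t+1}) − St(K_t)‖ ≤ (d/2) · diam(K₀), where diam(K₀) is the Euclidean diameter of K₀. -/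
open MeasureTheory Metric
open scoped RealInnerProductSpace

/-- The uniform probability distribution on the unit sphere of `EuclideanSpace ℝ (Fin d)`:
the normalized rotation-invariant surface measure. -/
noncomputable def uniformSphereMeasure (d : ℕ) :
    Measure (sphere (0 : EuclideanSpace ℝ (Fin d)) 1) :=
  (((volume : Measure (EuclideanSpace ℝ (Fin d))).toSphere) Set.univ)⁻¹ •
    ((volume : Measure (EuclideanSpace ℝ (Fin d))).toSphere)

/-- The Steiner point of a set `K ⊆ ℝ^d`:
`St(K) = d · E_{v ∼ Unif(S^{d−1})} [ (sup_{q ∈ K} ⟨v, q⟩) · v ]`. -/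
noncomputable def steinerPoint (d : ℕ) (K : Set (EuclideanSpace ℝ (Fin d))) :
    EuclideanSpace ℝ (Fin d) :=
  (d : ℝ) • ∫ v, (sSup ((fun q => ⟪(v : EuclideanSpace ℝ (Fin d)), q⟫) '' K)) •
      (v : EuclideanSpace ℝ (Fin d)) ∂(uniformSphereMeasure d)

section Aux

open Set
open scoped Pointwise

variable {d : ℕ}

local notation "E'" => EuclideanSpace ℝ (Fin d)

instance : MeasurableNeg (sphere (0 : E') 1) := ⟨continuous_neg.measurable⟩

lemma toSphere_map_neg :
    Measure.map (fun v => -v) (volume : Measure E').toSphere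
      = (volume : Measure E').toSphere := by
  ext s hs
  rw [Measure.map_apply measurable_neg hs,
      Measure.toSphere_apply' _ (measurable_neg hs), Measure.toSphere_apply' _ hs]
  congr 1
  have h1 : ((↑) '' ((fun v : sphere (0 : E') 1 => -v) ⁻¹' s) : Set E') = -((↑) '' s) := by
    ext x
    simp only [mem_image, mem_preimage, Set.mem_neg]
    constructor
    · rintro ⟨v, hv, rfl⟩
      exact ⟨-v, hv, (coe_neg_sphere v)⟩
    · rintro ⟨w, hw, hwx⟩
      refine ⟨-w, by simpa using hw, ?_⟩
      rw [coe_neg_sphere, hwx, neg_neg]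
  rw [h1, Set.smul_neg, Measure.measure_neg]

lemma uniformSphere_map_neg :
    Measure.map (fun v => -v) (uniformSphereMeasure d) = uniformSphereMeasure d := by
  rw [uniformSphereMeasure, Measure.map_smul, toSphere_map_neg]

lemma measurePreserving_neg_sphere :
    MeasurePreserving (fun v : sphere (0 : E') 1 => -v)
      (uniformSphereMeasure d) (uniformSphereMeasure d) :=
  ⟨measurable_neg, uniformSphere_map_neg⟩

lemma integral_neg_comp {F : Type*} [NormedAddCommGroup F] [NormedSpace ℝ F]
    (f : sphere (0 : E') 1 → F) :
    ∫ v, f (-v) ∂(uniformSphereMeasure d) = ∫ v, f v ∂(uniformSphereMeasure d) :=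
  measurePreserving_neg_sphere.integral_comp (MeasurableEquiv.neg _).measurableEmbedding f

lemma uniformSphere_isProb (hd : 1 ≤ d) : IsProbabilityMeasure (uniformSphereMeasure d) := by
  constructor
  rw [uniformSphereMeasure, Measure.smul_apply, smul_eq_mul]
  refine ENNReal.inv_mul_cancel ?_ ?_
  · rw [Measure.toSphere_apply_univ]
    refine mul_ne_zero ?_ (measure_ball_pos _ _ one_pos).ne'
    simp only [ne_eq, Nat.cast_eq_zero]
    have : Module.finrank ℝ E' = d := finrank_euclideanSpace_fin
    omega
  · exact (measure_lt_top _ _).ne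

/-- The support function of `K`. -/
noncomputable def suppFn (K : Set E') (v : E') : ℝ :=
  sSup ((fun q => ⟪v, q⟫) '' K)

lemma suppFn_bddAbove {K : Set E'} (hK : IsCompact K) (v : E') :
    BddAbove ((fun q => ⟪v, q⟫) '' K) :=
  (hK.image (continuous_const.inner continuous_id)).bddAbove

lemma le_suppFn {K : Set E'} (hK : IsCompact K) {q : E'} (hq : q ∈ K) (v : E') :
    ⟪v, q⟫ ≤ suppFn K v :=
  le_csSup (suppFn_bddAbove hK v) (mem_image_of_mem _ hq)

lemma suppFn_exists_eq {K : Set E'} (hK : IsCompact K) (hne : K.Nonempty) (v : E') :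
    ∃ p ∈ K, suppFn K v = ⟪v, p⟫ := by
  obtain ⟨p, hp, hmax⟩ := hK.exists_isMaxOn (f := fun q : E' => (⟪v, q⟫ : ℝ)) hne
    ((continuous_const.inner continuous_id).continuousOn)
  refine ⟨p, hp, IsGreatest.csSup_eq ⟨mem_image_of_mem _ hp, ?_⟩⟩
  rintro x ⟨q, hq, rfl⟩
  exact hmax hq

lemma suppFn_le {K : Set E'} (hne : K.Nonempty) {v : E'} {c : ℝ}
    (h : ∀ q ∈ K, ⟪v, q⟫ ≤ c) : suppFn K v ≤ c := by
  refine csSup_le (hne.image _) ?_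
  rintro x ⟨q, hq, rfl⟩
  exact h q hq

lemma suppFn_mono {A B : Set E'} (hA : A.Nonempty) (hB : IsCompact B) (hAB : A ⊆ B) (v : E') :
    suppFn A v ≤ suppFn B v :=
  csSup_le_csSup (suppFn_bddAbove hB v) (hA.image _) (image_mono hAB)

lemma suppFn_continuous {K : Set E'} (hK : IsCompact K) (hne : K.Nonempty) :
    Continuous (suppFn K) := by
  obtain ⟨C, hC⟩ : ∃ C : ℝ, ∀ x ∈ K, ‖x‖ ≤ C := hK.isBounded.exists_norm_le
  have hC0 : 0 ≤ C := le_trans (norm_nonneg _) (hC _ hne.choose_spec)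
  have key : ∀ v w : E', suppFn K v - suppFn K w ≤ C * ‖v - w‖ := by
    intro v w
    rw [sub_le_iff_le_add]
    refine suppFn_le hne fun q hq => ?_
    have h1 : ⟪v, q⟫ = ⟪w, q⟫ + ⟪v - w, q⟫ := by
      rw [← inner_add_left]; congr 1; abel
    rw [h1, add_comm]
    gcongr
    · exact le_trans (real_inner_le_norm _ _)
        (by nlinarith [hC q hq, norm_nonneg (v - w), norm_nonneg q])
    · exact le_suppFn hK hq w
  have : LipschitzWith (Real.toNNReal C) (suppFn K) := by
    refine LipschitzWith.of_dist_le_mul fun v w => ?_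
    rw [Real.dist_eq, dist_eq_norm]
    have h2 : (Real.toNNReal C : ℝ) = C := Real.coe_toNNReal _ hC0
    rw [h2]
    refine abs_sub_le_iff.2 ⟨key v w, ?_⟩
    have h3 := key w v
    rwa [norm_sub_rev] at h3
  exact this.continuous

end Aux

/-- **Competitiveness of the Steiner point selector for nested convex body chasing.**
Let `d ≥ 1` and let `K₀ ⊇ K₁ ⊇ … ⊇ K_T` be nested nonempty compact convex subsets of `ℝ^d`.
Then `∑_{t=0}^{T−1} ‖St(K_{t+1}) − St(K_t)‖ ≤ (d/2) · diam(K₀)`. -/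
theorem steinerPoint_total_movement_le
    (d T : ℕ) (hd : 1 ≤ d) (K : ℕ → Set (EuclideanSpace ℝ (Fin d)))
    (hne : ∀ t ≤ T, (K t).Nonempty)
    (hcpt : ∀ t ≤ T, IsCompact (K t))
    (hcvx : ∀ t ≤ T, Convex ℝ (K t))
    (hnested : ∀ t < T, K (t + 1) ⊆ K t) :
    ∑ t ∈ Finset.range T, ‖steinerPoint d (K (t + 1)) - steinerPoint d (K t)‖ ≤
      ((d : ℝ) / 2) * Metric.diam (K 0) := by
  classical
  haveI : IsProbabilityMeasure (uniformSphereMeasure d) := uniformSphere_isProb hd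
  set μ := uniformSphereMeasure d with hμdef
  -- the sphere is a compact space
  haveI : CompactSpace (sphere (0 : EuclideanSpace ℝ (Fin d)) 1) :=
    isCompact_iff_compactSpace.1 (isCompact_sphere _ _)
  -- rewrite steinerPoint in terms of suppFn
  have hst : ∀ A : Set (EuclideanSpace ℝ (Fin d)),
      steinerPoint d A = (d : ℝ) • ∫ v : sphere (0 : EuclideanSpace ℝ (Fin d)) 1,
        suppFn A (v : EuclideanSpace ℝ (Fin d)) • (v : EuclideanSpace ℝ (Fin d)) ∂μ := by
    intro A; rfl
  -- continuity of integrands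
  have hcont : ∀ t ≤ T, Continuous fun v : sphere (0 : EuclideanSpace ℝ (Fin d)) 1 =>
      suppFn (K t) (v : EuclideanSpace ℝ (Fin d)) :=
    fun t ht => (suppFn_continuous (hcpt t ht) (hne t ht)).comp continuous_subtype_val
  have hint : ∀ t ≤ T, Integrable (fun v : sphere (0 : EuclideanSpace ℝ (Fin d)) 1 =>
      suppFn (K t) (v : EuclideanSpace ℝ (Fin d))) μ :=
    fun t ht => ((hcont t ht).integrable_of_hasCompactSupport
      ((isClosed_tsupport _).isCompact))
  have hintv : ∀ t ≤ T, Integrable (fun v : sphere (0 : EuclideanSpace ℝ (Fin d)) 1 =>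
      suppFn (K t) (v : EuclideanSpace ℝ (Fin d)) • (v : EuclideanSpace ℝ (Fin d))) μ :=
    fun t ht => (((hcont t ht).smul continuous_subtype_val).integrable_of_hasCompactSupport
      ((isClosed_tsupport _).isCompact))
  set I : ℕ → ℝ := fun t => ∫ v : sphere (0 : EuclideanSpace ℝ (Fin d)) 1,
      suppFn (K t) (v : EuclideanSpace ℝ (Fin d)) ∂μ with hI
  -- norm of each unit vector
  have hnorm1 : ∀ v : sphere (0 : EuclideanSpace ℝ (Fin d)) 1,
      ‖(v : EuclideanSpace ℝ (Fin d))‖ = 1 := fun v => by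
    have := v.2; rwa [mem_sphere_zero_iff_norm] at this
  -- step bound
  have key : ∀ t < T, ‖steinerPoint d (K (t + 1)) - steinerPoint d (K t)‖ ≤
      (d : ℝ) * (I t - I (t + 1)) := by
    intro t ht
    have ht1 : t + 1 ≤ T := ht
    have ht0 : t ≤ T := le_of_lt ht
    rw [hst, hst, ← smul_sub, norm_smul, Real.norm_natCast,
        ← integral_sub (hintv _ ht1) (hintv _ ht0)]
    have hb : ‖∫ v : sphere (0 : EuclideanSpace ℝ (Fin d)) 1,
        (suppFn (K (t+1)) (v : EuclideanSpace ℝ (Fin d)) • (v : EuclideanSpace ℝ (Fin d)) -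
         suppFn (K t) (v : EuclideanSpace ℝ (Fin d)) • (v : EuclideanSpace ℝ (Fin d))) ∂μ‖
        ≤ ∫ v : sphere (0 : EuclideanSpace ℝ (Fin d)) 1,
          (suppFn (K t) (v : EuclideanSpace ℝ (Fin d)) -
           suppFn (K (t+1)) (v : EuclideanSpace ℝ (Fin d))) ∂μ := by
      refine le_trans (norm_integral_le_integral_norm _) ?_
      refine integral_mono_of_nonneg (Filter.Eventually.of_forall fun v => norm_nonneg _)
        ((hint _ ht0).sub (hint _ ht1)) (Filter.Eventually.of_forall fun v => ?_)
      simp only [← sub_smul, norm_smul, Real.norm_eq_abs, hnorm1, mul_one]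
      rw [abs_sub_comm,
        abs_of_nonneg (sub_nonneg.2 (suppFn_mono (hne _ ht1) (hcpt _ ht0) (hnested t ht) _))]
    calc (d : ℝ) * ‖∫ v : sphere (0 : EuclideanSpace ℝ (Fin d)) 1,
          (suppFn (K (t+1)) (v : EuclideanSpace ℝ (Fin d)) • (v : EuclideanSpace ℝ (Fin d)) -
           suppFn (K t) (v : EuclideanSpace ℝ (Fin d)) • (v : EuclideanSpace ℝ (Fin d))) ∂μ‖ ≤ (d : ℝ) * ∫ v : sphere (0 : EuclideanSpace ℝ (Fin d)) 1,
          (suppFn (K t) (v : EuclideanSpace ℝ (Fin d)) -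
           suppFn (K (t+1)) (v : EuclideanSpace ℝ (Fin d))) ∂μ := by
            exact mul_le_mul_of_nonneg_left hb (Nat.cast_nonneg d)
      _ = (d : ℝ) * (I t - I (t + 1)) := by
            rw [integral_sub (hint _ ht0) (hint _ ht1)]
  -- I T ≥ 0
  have hIT : 0 ≤ I T := by
    obtain ⟨q, hq⟩ := hne T le_rfl
    have hzero : ∫ v : sphere (0 : EuclideanSpace ℝ (Fin d)) 1,
        ⟪(v : EuclideanSpace ℝ (Fin d)), q⟫ ∂μ = 0 := by
      have h1 := integral_neg_comp (d := d)
        (fun v : sphere (0 : EuclideanSpace ℝ (Fin d)) 1 =>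
          ⟪(v : EuclideanSpace ℝ (Fin d)), q⟫)
      have h2 : (fun v : sphere (0 : EuclideanSpace ℝ (Fin d)) 1 =>
          ⟪((-v : sphere (0 : EuclideanSpace ℝ (Fin d)) 1) : EuclideanSpace ℝ (Fin d)), q⟫) =
          fun v : sphere (0 : EuclideanSpace ℝ (Fin d)) 1 =>
            -⟪(v : EuclideanSpace ℝ (Fin d)), q⟫ := by
        funext v; rw [coe_neg_sphere, inner_neg_left]
      rw [h2, integral_neg] at h1
      rw [hμdef]
      linarith
    have hintq : Integrable (fun v : sphere (0 : EuclideanSpace ℝ (Fin d)) 1 =>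
        ⟪(v : EuclideanSpace ℝ (Fin d)), q⟫) μ :=
      ((continuous_subtype_val.inner
        continuous_const)).integrable_of_hasCompactSupport ((isClosed_tsupport _).isCompact)
    have hmono := integral_mono hintq (hint T le_rfl)
      (fun v => le_suppFn (hcpt T le_rfl) hq (v : EuclideanSpace ℝ (Fin d)))
    rw [hzero] at hmono
    simpa only [hI] using hmono
  -- I 0 ≤ diam / 2
  have hI0 : I 0 ≤ Metric.diam (K 0) / 2 := by
    have hflip : I 0 = ∫ v : sphere (0 : EuclideanSpace ℝ (Fin d)) 1,
        suppFn (K 0) (-(v : EuclideanSpace ℝ (Fin d))) ∂μ := by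
      simp only [hI, hμdef]
      rw [← integral_neg_comp (d := d) (fun v : sphere (0 : EuclideanSpace ℝ (Fin d)) 1 =>
        suppFn (K 0) (v : EuclideanSpace ℝ (Fin d)))]
      rfl
    have hpt : ∀ v : sphere (0 : EuclideanSpace ℝ (Fin d)) 1,
        suppFn (K 0) (v : EuclideanSpace ℝ (Fin d)) +
          suppFn (K 0) (-(v : EuclideanSpace ℝ (Fin d))) ≤ Metric.diam (K 0) := by
      intro v
      obtain ⟨p₁, hp₁, he₁⟩ := suppFn_exists_eq (hcpt 0 (Nat.zero_le T)) (hne 0 (Nat.zero_le T))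
        (v : EuclideanSpace ℝ (Fin d))
      obtain ⟨p₂, hp₂, he₂⟩ := suppFn_exists_eq (hcpt 0 (Nat.zero_le T)) (hne 0 (Nat.zero_le T))
        (-(v : EuclideanSpace ℝ (Fin d)))
      rw [he₁, he₂, inner_neg_left, ← sub_eq_add_neg, ← inner_sub_right]
      calc ⟪(v : EuclideanSpace ℝ (Fin d)), p₁ - p₂⟫ ≤ ‖(v : EuclideanSpace ℝ (Fin d))‖ * ‖p₁ - p₂‖ :=
            real_inner_le_norm _ _
        _ = dist p₁ p₂ := by rw [hnorm1, one_mul, dist_eq_norm]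
        _ ≤ Metric.diam (K 0) := dist_le_diam_of_mem (hcpt 0 (Nat.zero_le T)).isBounded hp₁ hp₂
    have h2I : 2 * I 0 ≤ Metric.diam (K 0) := by
      have hint0 := hint 0 (Nat.zero_le T)
      have hintflip : Integrable (fun v : sphere (0 : EuclideanSpace ℝ (Fin d)) 1 =>
          suppFn (K 0) (-(v : EuclideanSpace ℝ (Fin d)))) μ := by
        refine ((suppFn_continuous (hcpt 0 (Nat.zero_le T)) (hne 0 (Nat.zero_le T))).comp
          (continuous_subtype_val.neg)).integrable_of_hasCompactSupport
          ((isClosed_tsupport _).isCompact)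
      have := integral_add hint0 hintflip
      have hsum : ∫ v : sphere (0 : EuclideanSpace ℝ (Fin d)) 1,
          (suppFn (K 0) (v : EuclideanSpace ℝ (Fin d)) +
           suppFn (K 0) (-(v : EuclideanSpace ℝ (Fin d)))) ∂μ ≤ Metric.diam (K 0) := by
        calc _ ≤ ∫ _v : sphere (0 : EuclideanSpace ℝ (Fin d)) 1, Metric.diam (K 0) ∂μ :=
              integral_mono (hint0.add hintflip) (integrable_const _) hpt
          _ = Metric.diam (K 0) := by simp [measure_univ]
      rw [this] at hsum
      rw [← hflip] at hsum
      have hf0 : ∫ v : sphere (0 : EuclideanSpace ℝ (Fin d)) 1,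
          suppFn (K 0) (v : EuclideanSpace ℝ (Fin d)) ∂μ = I 0 := by simp only [hI]
      rw [hf0] at hsum
      linarith
    linarith
  -- put it all together
  calc ∑ t ∈ Finset.range T, ‖steinerPoint d (K (t + 1)) - steinerPoint d (K t)‖
      ≤ ∑ t ∈ Finset.range T, (d : ℝ) * (I t - I (t + 1)) := by
        refine Finset.sum_le_sum fun t ht => key t (Finset.mem_range.1 ht)
    _ = (d : ℝ) * (I 0 - I T) := by
        rw [← Finset.mul_sum, Finset.sum_range_sub' I]
    _ ≤ (d : ℝ) * (Metric.diam (K 0) / 2) := by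
        have : I 0 - I T ≤ Metric.diam (K 0) / 2 := by linarith
        exact mul_le_mul_of_nonneg_left this (Nat.cast_nonneg d)
    _ = ((d : ℝ) / 2) * Metric.diam (K 0) := by ring
end
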